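/- arXiv:2112.12736 — 6 statements merged into one kernel-verified Lean document; each statement's English description precedes it below -/
import Mathlib

section
/- Let L be a Lie algebra over ℂ with elements α_k for integers k ≥ -1 satisfying [α_k, α_ℓ] = (k - ℓ)·α_{k+ℓ} for all k, ℓ ≥ -1 (with brackets landing in the span of the α's). For each natural number m define the formal (finite-in-each-component, or suitably convergent) combination α̃_m := - ∑_{k ≥ -1} ((-m)^{k+1} / (k+1)!) · α_k, interpreted in the completion of L with respect to the grading by k. Then [α̃_m, α̃_n] = (m - n)·α̃_{m+n} for all m, n ≥ 0. -/
open Finset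

/- The completion of the Lie algebra spanned by `α_k`, `k ≥ -1`, with
`[α_k, α_ℓ] = (k-ℓ)·α_{k+ℓ}`: its elements are formal series `∑_{k ≥ -1} c_k α_k`,
encoded as coefficient functions `ℕ → ℂ` via the shift `j ↦ (coefficient of α_{j-1})`.
The bracket is well defined because for each total degree only finitely many pairs
contribute. -/

/-- The bracket of two formal series `c = ∑_{k≥-1} c_k α_k`, `d = ∑_{k≥-1} d_k α_k`:
the coefficient of `α_k` in `[c,d]` is `∑_{k₁+k₂=k, k₁,k₂≥-1} c_{k₁} d_{k₂} (k₁-k₂)`;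
in the shifted indices `j = k+1`, `j_i = k_i+1` this reads
`[c,d]_j = ∑_{j₁+j₂=j+1} c_{j₁} d_{j₂} (j₁-j₂)`. -/
noncomputable def bracket (c d : ℕ → ℂ) : ℕ → ℂ := fun j =>
  ∑ p ∈ range (j+2), c p * d (j+1-p) * ((p : ℂ) - ((j+1-p : ℕ) : ℂ))

/-- The element `α̃_m = -∑_{k ≥ -1} ((-m)^{k+1}/(k+1)!)·α_k` of the completion
(in shifted index `j = k+1`, its `j`-th coefficient is `-(-m)^j/j!`). -/
noncomputable def atilde (m : ℕ) : ℕ → ℂ := fun j =>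
  -((-(m : ℂ)) ^ j / (j.factorial : ℂ))

lemma bin (x y : ℂ) (j : ℕ) :
    ∑ p ∈ range (j+1), x^p * y^(j-p) / ((p.factorial : ℂ) * ((j-p).factorial : ℂ))
      = (x+y)^j / (j.factorial : ℂ) := by
  rw [add_pow, Finset.sum_div]
  refine Finset.sum_congr rfl fun p hp => ?_
  have hpj : p ≤ j := Nat.lt_succ_iff.mp (mem_range.mp hp)
  rw [Nat.cast_choose ℂ hpj]
  have h1 : (p.factorial : ℂ) ≠ 0 := Nat.cast_ne_zero.mpr p.factorial_ne_zero
  have h2 : (((j-p).factorial : ℕ) : ℂ) ≠ 0 := Nat.cast_ne_zero.mpr (j-p).factorial_ne_zero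
  have h3 : (j.factorial : ℂ) ≠ 0 := Nat.cast_ne_zero.mpr j.factorial_ne_zero
  field_simp

lemma aux (x y : ℂ) (j : ℕ) :
    ∑ p ∈ range (j+2), (p:ℂ) * (x^p * y^(j+1-p) / ((p.factorial : ℂ) * ((j+1-p).factorial : ℂ)))
      = x * ((x+y)^j / (j.factorial : ℂ)) := by
  rw [Finset.sum_range_succ']
  simp only [Nat.cast_zero, zero_mul, add_zero]
  have : ∀ p ∈ range (j+1),
      ((p+1 : ℕ):ℂ) * (x^(p+1) * y^(j+1-(p+1)) / (((p+1).factorial : ℂ) * ((j+1-(p+1)).factorial : ℂ)))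
      = x * (x^p * y^(j-p) / ((p.factorial : ℂ) * ((j-p).factorial : ℂ))) := by
    intro p _
    have hs : j + 1 - (p+1) = j - p := by omega
    rw [hs, Nat.factorial_succ]
    have h1 : (p.factorial : ℂ) ≠ 0 := Nat.cast_ne_zero.mpr p.factorial_ne_zero
    have h2 : (((j-p).factorial : ℕ) : ℂ) ≠ 0 := Nat.cast_ne_zero.mpr (j-p).factorial_ne_zero
    have h3 : ((p:ℂ) + 1) ≠ 0 := Nat.cast_add_one_ne_zero p
    push_cast
    field_simp
    ring
  rw [Finset.sum_congr rfl this, ← Finset.mul_sum, bin]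

/-- `[α̃_m, α̃_n] = (m-n)·α̃_{m+n}` for all `m, n ≥ 0`. -/
theorem stmt0 (m n : ℕ) :
    bracket (atilde m) (atilde n) = fun j => ((m : ℂ) - (n : ℂ)) * atilde (m+n) j := by
  funext j
  set x : ℂ := -(m : ℂ) with hx
  set y : ℂ := -(n : ℂ) with hy
  have key : ∀ p ∈ range (j+2),
      atilde m p * atilde n (j+1-p) * ((p : ℂ) - ((j+1-p : ℕ) : ℂ))
      = (p:ℂ) * (x^p * y^(j+1-p) / ((p.factorial : ℂ) * ((j+1-p).factorial : ℂ)))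
        - ((j+1-p : ℕ):ℂ) * (x^p * y^(j+1-p) / ((p.factorial : ℂ) * ((j+1-p).factorial : ℂ))) := by
    intro p _
    simp only [atilde, ← hx, ← hy]
    ring
  have hrefl : ∑ p ∈ range (j+2),
      ((j+1-p : ℕ):ℂ) * (x^p * y^(j+1-p) / ((p.factorial : ℂ) * ((j+1-p).factorial : ℂ)))
      = y * ((y+x)^j / (j.factorial : ℂ)) := by
    rw [← aux y x j, ← Finset.sum_range_reflect
      (fun p => (p:ℂ) * (y^p * x^(j+1-p) / ((p.factorial : ℂ) * ((j+1-p).factorial : ℂ)))) (j+2)]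
    refine Finset.sum_congr rfl fun p hp => ?_
    have hpj : p ≤ j + 1 := Nat.lt_succ_iff.mp (mem_range.mp hp)
    have h1 : j + 2 - 1 - p = j + 1 - p := by omega
    have h2 : j + 1 - (j + 1 - p) = p := by omega
    simp only [h1, h2]
    ring
  rw [bracket, Finset.sum_congr rfl key, Finset.sum_sub_distrib, aux x y j, hrefl]
  have hxy : y + x = x + y := by ring
  rw [hxy]
  have : x + y = -(((m+n : ℕ)):ℂ) := by push_cast [hx, hy]; ring
  simp only [atilde, this]
  field_simp [hx, hy]
  ring
end

section
/- For all integers m, n ≥ 0 and all integers k ≥ -1, the identity ∑_{k₁ ≥ 0, k₂ ≥ -1, k₁+k₂ = k} (-m)^{k₁+1}·(-n)^{k₂+1} / (k₁! · (k₂+1)!) − ∑_{k₁ ≥ -1, k₂ ≥ 0, k₁+k₂ = k} (-m)^{k₁+1}·(-n)^{k₂+1} / ((k₁+1)! · k₂!) = ((-1)^k / (k+1)!) · (m − n) · (m + n)^{k+1} holds in ℚ. -/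
open Finset

lemma aux_expsum (K : ℕ) (x y : ℚ) :
    ∑ i ∈ range (K + 1), x ^ i * y ^ (K - i) / ((i.factorial : ℚ) * ((K - i).factorial : ℚ))
      = (x + y) ^ K / (K.factorial : ℚ) := by
  rw [add_pow, Finset.sum_div]
  refine Finset.sum_congr rfl fun i hi => ?_
  have hiK : i ≤ K := Nat.lt_succ_iff.mp (Finset.mem_range.mp hi)
  rw [Nat.cast_choose ℚ hiK]
  have h1 : (i.factorial : ℚ) ≠ 0 := Nat.cast_ne_zero.mpr i.factorial_ne_zero
  have h2 : (((K - i).factorial : ℚ)) ≠ 0 := Nat.cast_ne_zero.mpr (K - i).factorial_ne_zero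
  have h3 : ((K.factorial : ℚ)) ≠ 0 := Nat.cast_ne_zero.mpr K.factorial_ne_zero
  field_simp

lemma aux_shift (K : ℕ) (x y : ℚ) :
    ∑ i ∈ range (K + 1), x ^ (i + 1) * y ^ (K - i) / ((i.factorial : ℚ) * ((K - i).factorial : ℚ))
      = x * ((x + y) ^ K / (K.factorial : ℚ)) := by
  rw [← aux_expsum, Finset.mul_sum]
  refine Finset.sum_congr rfl fun i _ => ?_
  rw [pow_succ']
  ring

/-- For all integers `m, n ≥ 0` and all integers `k ≥ -1` (written via `K := (k+1).toNat`, so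
that `k = K - 1`), the identity
`∑_{k₁≥0,k₂≥-1,k₁+k₂=k} (-m)^(k₁+1)(-n)^(k₂+1)/(k₁!(k₂+1)!)
 - ∑_{k₁≥-1,k₂≥0,k₁+k₂=k} (-m)^(k₁+1)(-n)^(k₂+1)/((k₁+1)!k₂!)
 = ((-1)^k/(k+1)!)·(m-n)·(m+n)^(k+1)` holds in `ℚ`.  (In the first sum `k₁ = i`,
`k₂+1 = K-i`; in the second `k₂ = i`, `k₁+1 = K-i`; and `(-1)^k = (-1)^(K+1)`,
`(k+1)! = K!`, `(m+n)^(k+1) = (m+n)^K`.) -/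
theorem stmt1 (m n : ℕ) (k : ℤ) (hk : -1 ≤ k) :
    (∑ i ∈ range ((k+1).toNat + 1),
        (-(m:ℚ))^(i+1) * (-(n:ℚ))^((k+1).toNat - i) /
          ((i.factorial : ℚ) * (((k+1).toNat - i).factorial : ℚ)))
    - (∑ i ∈ range ((k+1).toNat + 1),
        (-(m:ℚ))^((k+1).toNat - i) * (-(n:ℚ))^(i+1) /
          (((((k+1).toNat - i).factorial : ℚ)) * (i.factorial : ℚ)))
    = ((-1:ℚ)^((k+1).toNat + 1) / (((k+1).toNat).factorial : ℚ)) *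
        ((m:ℚ) - (n:ℚ)) * ((m:ℚ) + (n:ℚ))^((k+1).toNat) := by
  set K := (k+1).toNat with hK
  have h2 : (∑ i ∈ range (K + 1),
      (-(m:ℚ))^(K - i) * (-(n:ℚ))^(i+1) / (((K - i).factorial : ℚ) * (i.factorial : ℚ)))
      = ∑ i ∈ range (K + 1),
      (-(n:ℚ))^(i+1) * (-(m:ℚ))^(K - i) / ((i.factorial : ℚ) * ((K - i).factorial : ℚ)) := by
    refine Finset.sum_congr rfl fun i _ => ?_
    ring
  rw [h2, aux_shift, aux_shift]
  have hmn : (-(m:ℚ) + -(n:ℚ)) ^ K = (-1:ℚ)^K * ((m:ℚ) + (n:ℚ))^K := by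
    rw [← neg_pow, neg_add]
  have hnm : (-(n:ℚ) + -(m:ℚ)) ^ K = (-1:ℚ)^K * ((m:ℚ) + (n:ℚ))^K := by
    rw [← neg_pow, neg_add]; ring_nf
  rw [hmn, hnm, pow_succ]
  ring
end

section
/- Let Q ∈ ℂ[x][[T₁, T₃, T₅, …]] be a formal power series in the odd variables T_{2a+1} with polynomial coefficients in x, satisfying the equation Q = −x/2 + ∑_{a ≥ 0} T_{2a+1} · Q^{2a+1}/a!. Then Q is unique, Q(x, 0) = −x/2, and Q satisfies the hierarchy of PDEs ∂Q/∂T_{2a+1} = (Q^{2a}/a!) · ∂Q/∂T₁ for every a ≥ 0. -/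
/- We work in `ℂ[x][[T₁, T₃, T₅, …]]`, modelled as `MvPowerSeries ℕ (Polynomial ℂ)`
where the variable with index `a : ℕ` is `T_{2a+1}`. -/

/-- The series `∑_{a ≥ 0} T_{2a+1}·Q^{2a+1}/a!`, defined coefficientwise (for a fixed
monomial `σ` only the finitely many `a` with `σ a ≥ 1` contribute, and the coefficient
of `σ` in `T_{2a+1}·F` is the coefficient of `σ - e_a` in `F`). -/
noncomputable def rhsSum (Q : MvPowerSeries ℕ (Polynomial ℂ)) : MvPowerSeries ℕ (Polynomial ℂ) :=
  fun σ => ∑ a ∈ σ.support,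
    Polynomial.C ((a.factorial : ℂ)⁻¹) *
      MvPowerSeries.coeff (R := Polynomial ℂ) (σ - Finsupp.single a 1) (Q ^ (2*a+1))

/-- The formal partial derivative `∂/∂T_{2i+1}`. -/
noncomputable def pd (i : ℕ) (f : MvPowerSeries ℕ (Polynomial ℂ)) :
    MvPowerSeries ℕ (Polynomial ℂ) :=
  fun σ => ((σ i + 1 : ℕ) : Polynomial ℂ) *
    MvPowerSeries.coeff (R := Polynomial ℂ) (σ + Finsupp.single i 1) f

open Finsupp MvPowerSeries Finset

section

local notation "R" => Polynomial ℂ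
local notation "M" => MvPowerSeries ℕ (Polynomial ℂ)

lemma degree_add (u v : ℕ →₀ ℕ) : (u + v).degree = u.degree + v.degree := by
  show (u+v).sum (fun _ n => n) = u.sum (fun _ n => n) + v.sum (fun _ n => n)
  exact Finsupp.sum_add_index' (fun _ => rfl) (fun _ _ _ => rfl)

lemma degree_single (a : ℕ) : (Finsupp.single a 1 : ℕ →₀ ℕ).degree = 1 := by
  show ∑ i ∈ (Finsupp.single a 1 : ℕ →₀ ℕ).support, _ = 1
  rw [Finsupp.support_single_ne_zero _ one_ne_zero, Finset.sum_singleton, Finsupp.single_eq_same]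

lemma coeff_pd (i : ℕ) (f : M) (σ : ℕ →₀ ℕ) :
    MvPowerSeries.coeff σ (pd i f)
      = ((σ i + 1 : ℕ) : R) * MvPowerSeries.coeff (σ + Finsupp.single i 1) f := rfl

lemma pd_congr_coeff {i : ℕ} {f g : M} {σ : ℕ →₀ ℕ}
    (h : MvPowerSeries.coeff (σ + Finsupp.single i 1) f
       = MvPowerSeries.coeff (σ + Finsupp.single i 1) g) :
    MvPowerSeries.coeff σ (pd i f) = MvPowerSeries.coeff σ (pd i g) := by
  rw [coeff_pd, coeff_pd, h]

lemma pd_add (i : ℕ) (f g : M) : pd i (f + g) = pd i f + pd i g := by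
  refine MvPowerSeries.ext fun σ => ?_
  simp only [map_add, coeff_pd, mul_add]

lemma pd_C (i : ℕ) (r : R) : pd i (MvPowerSeries.C (σ := ℕ) r) = 0 := by
  refine MvPowerSeries.ext fun σ => ?_
  rw [coeff_pd, MvPowerSeries.coeff_C, if_neg, mul_zero, map_zero]
  intro h
  have := congrArg (fun w : ℕ →₀ ℕ => w i) h
  simp at this
lemma sum_shift (f g : M) (i : ℕ) (σ : ℕ →₀ ℕ) :
    ∑ p ∈ Finset.HasAntidiagonal.antidiagonal σ,
      (((p.1 : ℕ →₀ ℕ) i + 1 : ℕ) : R) * (MvPowerSeries.coeff (p.1 + Finsupp.single i 1) f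
        * MvPowerSeries.coeff p.2 g)
    = ∑ p ∈ Finset.HasAntidiagonal.antidiagonal (σ + Finsupp.single i 1),
      (((p.1 : ℕ →₀ ℕ) i : ℕ) : R) * (MvPowerSeries.coeff p.1 f * MvPowerSeries.coeff p.2 g) := by
  apply Finset.sum_bij_ne_zero (fun p _ _ => (p.1 + Finsupp.single i 1, p.2))
  · rintro ⟨u, v⟩ h₁ _
    rw [Finset.HasAntidiagonal.mem_antidiagonal] at h₁ ⊢
    rw [← h₁]; dsimp; abel
  · rintro ⟨u₁, v₁⟩ _ _ ⟨u₂, v₂⟩ _ _ h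
    simp only [Prod.mk.injEq] at h ⊢
    exact ⟨add_right_cancel h.1, h.2⟩
  · rintro ⟨u, v⟩ hm hne
    have hu : u i ≠ 0 := by
      intro h0
      apply hne
      dsimp only
      rw [h0]; simp
    have hle : Finsupp.single i 1 ≤ u := Finsupp.single_le_iff.mpr (Nat.one_le_iff_ne_zero.mpr hu)
    have hcan : u - Finsupp.single i 1 + Finsupp.single i 1 = u := tsub_add_cancel_of_le hle
    refine ⟨(u - Finsupp.single i 1, v), ?_, ?_, ?_⟩
    · rw [Finset.HasAntidiagonal.mem_antidiagonal] at hm ⊢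
      apply add_right_cancel (b := Finsupp.single i 1)
      rw [add_right_comm, hcan, hm]
    · dsimp only
      rw [hcan]
      intro h0
      apply hne
      rw [Finsupp.tsub_apply, Finsupp.single_eq_same] at h0
      have h1 : 1 ≤ u i := Nat.one_le_iff_ne_zero.mpr hu
      have heq : u i - 1 + 1 = u i := by omega
      rw [heq] at h0
      dsimp only
      exact h0
    · dsimp only
      rw [hcan]
  · rintro ⟨u, v⟩ _ _
    dsimp only
    rw [Finsupp.add_apply, Finsupp.single_eq_same]

lemma pd_mul (i : ℕ) (f g : M) : pd i (f * g) = pd i f * g + f * pd i g := by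
  refine MvPowerSeries.ext fun σ => ?_
  rw [map_add, coeff_pd, MvPowerSeries.coeff_mul]
  have h1 : MvPowerSeries.coeff σ (pd i f * g)
      = ∑ p ∈ Finset.HasAntidiagonal.antidiagonal σ, (((p.1 : ℕ →₀ ℕ) i + 1 : ℕ) : R) *
          (MvPowerSeries.coeff (p.1 + Finsupp.single i 1) f * MvPowerSeries.coeff p.2 g) := by
    rw [MvPowerSeries.coeff_mul]
    refine Finset.sum_congr rfl fun p _ => ?_
    rw [coeff_pd]; ring
  have h2 : MvPowerSeries.coeff σ (f * pd i g)
      = ∑ p ∈ Finset.HasAntidiagonal.antidiagonal σ, (((p.1 : ℕ →₀ ℕ) i + 1 : ℕ) : R) *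
          (MvPowerSeries.coeff (p.1 + Finsupp.single i 1) g * MvPowerSeries.coeff p.2 f) := by
    rw [mul_comm, MvPowerSeries.coeff_mul]
    refine Finset.sum_congr rfl fun p _ => ?_
    rw [coeff_pd]; ring
  rw [h1, h2, sum_shift, sum_shift]
  have h3 : ∑ p ∈ Finset.HasAntidiagonal.antidiagonal (σ + Finsupp.single i 1),
      (((p.1 : ℕ →₀ ℕ) i : ℕ) : R) * (MvPowerSeries.coeff p.1 g * MvPowerSeries.coeff p.2 f)
      = ∑ p ∈ Finset.HasAntidiagonal.antidiagonal (σ + Finsupp.single i 1),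
      (((p.2 : ℕ →₀ ℕ) i : ℕ) : R) * (MvPowerSeries.coeff p.2 g * MvPowerSeries.coeff p.1 f) := by
    conv_lhs => rw [← Finset.HasAntidiagonal.map_swap_antidiagonal]
    rw [Finset.sum_map]
    rfl
  rw [h3, Finset.mul_sum, ← Finset.sum_add_distrib]
  apply Finset.sum_congr rfl
  intro p hp
  rw [Finset.HasAntidiagonal.mem_antidiagonal] at hp
  have hpi : (p.1 : ℕ →₀ ℕ) i + (p.2 : ℕ →₀ ℕ) i = σ i + 1 := by
    have := congrArg (fun w : ℕ →₀ ℕ => w i) hp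
    simpa using this
  rw [← hpi]
  push_cast
  ring

lemma pd_zero (i : ℕ) : pd i (0 : M) = 0 := by
  refine MvPowerSeries.ext fun σ => ?_
  simp [coeff_pd]

lemma pd_sum (i : ℕ) {α : Type*} (s : Finset α) (F : α → M) :
    pd i (∑ a ∈ s, F a) = ∑ a ∈ s, pd i (F a) := by
  classical
  induction s using Finset.induction_on with
  | empty => simp [pd_zero]
  | insert _ _ h ih => rw [Finset.sum_insert h, Finset.sum_insert h, pd_add, ih]

lemma pd_pow (i : ℕ) (f : M) (n : ℕ) :
    pd i (f ^ (n + 1)) = ((n : M) + 1) * f ^ n * pd i f := by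
  induction n with
  | zero => simp
  | succ n ih =>
    have hf : f ^ (n + 1 + 1) = f * f ^ (n + 1) := by ring
    rw [hf, pd_mul, ih]
    push_cast
    ring

lemma pd_C_mul (i : ℕ) (r : R) (f : M) :
    pd i (MvPowerSeries.C (σ := ℕ) r * f) = MvPowerSeries.C (σ := ℕ) r * pd i f := by
  refine MvPowerSeries.ext fun σ => ?_
  rw [coeff_pd, MvPowerSeries.coeff_C_mul, MvPowerSeries.coeff_C_mul, coeff_pd]
  ring

lemma pd_X (i a : ℕ) : pd i (MvPowerSeries.X a : M) = if a = i then 1 else 0 := by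
  refine MvPowerSeries.ext fun σ => ?_
  rw [coeff_pd, MvPowerSeries.coeff_X]
  by_cases hai : a = i
  · subst hai
    rw [if_pos rfl, MvPowerSeries.coeff_one]
    by_cases h0 : σ = 0
    · subst h0; simp
    · rw [if_neg h0, if_neg, mul_zero]
      intro h
      exact h0 (add_eq_right.mp h)
  · have h1 : ¬(σ + Finsupp.single i 1 = Finsupp.single a 1) := by
      intro h
      have := congrArg (fun w : ℕ →₀ ℕ => w i) h
      simp [Finsupp.single_eq_of_ne (Ne.symm hai)] at this
    rw [if_neg h1, mul_zero, if_neg hai, map_zero]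

lemma coeff_X_mul_ite (a : ℕ) (G : M) (σ : ℕ →₀ ℕ) :
    MvPowerSeries.coeff σ (MvPowerSeries.X a * G)
      = if σ a ≠ 0 then MvPowerSeries.coeff (σ - Finsupp.single a 1) G else 0 := by
  rw [MvPowerSeries.coeff_mul]
  split_ifs with h
  · have hle : Finsupp.single a 1 ≤ σ := Finsupp.single_le_iff.mpr (Nat.one_le_iff_ne_zero.mpr h)
    refine (Finset.sum_eq_single_of_mem (Finsupp.single a 1, σ - Finsupp.single a 1) ?_ ?_).trans ?_
    · rw [Finset.HasAntidiagonal.mem_antidiagonal, add_comm, tsub_add_cancel_of_le hle]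
    · rintro ⟨u, v⟩ hm hne
      rw [Finset.HasAntidiagonal.mem_antidiagonal] at hm
      by_cases hu : u = Finsupp.single a 1
      · exfalso
        apply hne
        subst hu
        have : v = σ - Finsupp.single a 1 := by
          apply eq_tsub_of_add_eq
          rw [add_comm]; exact hm
        rw [this]
      · dsimp only
        rw [MvPowerSeries.coeff_X, if_neg hu, zero_mul]
    · dsimp only
      rw [MvPowerSeries.coeff_X, if_pos rfl, one_mul]
  · apply Finset.sum_eq_zero
    rintro ⟨u, v⟩ hm
    rw [Finset.HasAntidiagonal.mem_antidiagonal] at hm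
    dsimp only
    rw [MvPowerSeries.coeff_X, if_neg, zero_mul]
    intro hu
    apply h
    have h1 : u a + v a = σ a := by
      have := congrArg (fun w : ℕ →₀ ℕ => w a) hm
      simpa using this
    have : u a = 1 := by rw [hu]; simp
    omega

noncomputable def rhsF (F : ℕ → M) : M :=
  fun σ => ∑ a ∈ σ.support, MvPowerSeries.coeff (σ - Finsupp.single a 1) (F a)

lemma coeff_rhsF_eq (F : ℕ → M) (σ : ℕ →₀ ℕ) (S : Finset ℕ) (hS : σ.support ⊆ S) :
    MvPowerSeries.coeff σ (rhsF F)
      = MvPowerSeries.coeff σ (∑ a ∈ S, MvPowerSeries.X a * F a) := by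
  rw [map_sum]
  have : ∀ a ∈ S, MvPowerSeries.coeff σ (MvPowerSeries.X a * F a)
      = if σ a ≠ 0 then MvPowerSeries.coeff (σ - Finsupp.single a 1) (F a) else 0 :=
    fun a _ => coeff_X_mul_ite a (F a) σ
  rw [Finset.sum_congr rfl this, Finset.sum_ite, Finset.sum_const_zero, add_zero]
  show ∑ a ∈ σ.support, _ = _
  apply Finset.sum_congr
  · ext a
    simp only [Finset.mem_filter, Finsupp.mem_support_iff]
    constructor
    · intro h; exact ⟨hS (Finsupp.mem_support_iff.mpr h), h⟩
    · intro h; exact h.2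
  · intro a _; rfl

lemma constantCoeff_rhsF (F : ℕ → M) :
    MvPowerSeries.constantCoeff (σ := ℕ) (rhsF F) = 0 := by
  have h : MvPowerSeries.constantCoeff (σ := ℕ) (rhsF F)
      = ∑ a ∈ (0 : ℕ →₀ ℕ).support,
          MvPowerSeries.coeff ((0 : ℕ →₀ ℕ) - Finsupp.single a 1) (F a) := rfl
  rw [h]
  simp

lemma coeff_mul_congr (G G' H : M) (σ : ℕ →₀ ℕ)
    (h : ∀ τ ≤ σ, MvPowerSeries.coeff τ G = MvPowerSeries.coeff τ G') :
    MvPowerSeries.coeff σ (G * H) = MvPowerSeries.coeff σ (G' * H) := by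
  rw [MvPowerSeries.coeff_mul, MvPowerSeries.coeff_mul]
  apply Finset.sum_congr rfl
  intro p hp
  rw [Finset.HasAntidiagonal.mem_antidiagonal] at hp
  have hle : p.1 ≤ σ := by
    rw [← hp]
    exact le_self_add
  rw [h p.1 hle]

lemma rhsF_mul (F : ℕ → M) (H : M) : rhsF (fun a => F a * H) = rhsF F * H := by
  refine MvPowerSeries.ext fun σ => ?_
  rw [coeff_rhsF_eq _ σ σ.support le_rfl]
  have h1 : ∑ a ∈ σ.support, MvPowerSeries.X a * (F a * H)
      = (∑ a ∈ σ.support, MvPowerSeries.X a * F a) * H := by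
    rw [Finset.sum_mul]
    apply Finset.sum_congr rfl
    intro a _
    ring
  rw [h1]
  apply (coeff_mul_congr _ _ _ _ _).symm
  intro τ hτ
  exact coeff_rhsF_eq F τ σ.support (Finsupp.support_mono hτ)

lemma pd_rhsF (i : ℕ) (F : ℕ → M) :
    pd i (rhsF F) = F i + rhsF (fun a => pd i (F a)) := by
  refine MvPowerSeries.ext fun σ => ?_
  set e := Finsupp.single i 1 with he
  set S := (σ + e).support with hSdef
  have hiS : i ∈ S := by
    rw [hSdef, Finsupp.mem_support_iff]
    simp [he]
  have hsub : σ.support ⊆ S := Finsupp.support_mono (le_self_add : σ ≤ σ + e)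
  have key : MvPowerSeries.coeff σ (pd i (rhsF F))
      = MvPowerSeries.coeff σ (pd i (∑ a ∈ S, MvPowerSeries.X a * F a)) :=
    pd_congr_coeff (coeff_rhsF_eq F (σ + e) S le_rfl)
  rw [key, pd_sum]
  have hterm : ∀ a ∈ S, pd i (MvPowerSeries.X a * F a)
      = (if a = i then F i else 0) + MvPowerSeries.X a * pd i (F a) := by
    intro a _
    rw [pd_mul, pd_X]
    split_ifs with hA
    · subst hA; rw [one_mul]
    · rw [zero_mul]
  rw [Finset.sum_congr rfl hterm, Finset.sum_add_distrib, Finset.sum_ite_eq' S i (fun _ => F i),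
    if_pos hiS, map_add, map_add]
  congr 1
  exact ((coeff_rhsF_eq (fun a => pd i (F a)) σ S hsub).symm)

lemma rhsSum_eq (Q : M) : rhsSum Q
    = rhsF (fun a => MvPowerSeries.C (σ := ℕ) (Polynomial.C ((a.factorial : ℂ)⁻¹)) * Q ^ (2*a+1)) := by
  refine MvPowerSeries.ext fun σ => ?_
  have e1 : MvPowerSeries.coeff σ (rhsSum Q) = ∑ a ∈ σ.support,
      Polynomial.C ((a.factorial : ℂ)⁻¹)
        * MvPowerSeries.coeff (σ - Finsupp.single a 1) (Q ^ (2*a+1)) := rfl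
  have e2 : MvPowerSeries.coeff σ
      (rhsF (fun a => MvPowerSeries.C (σ := ℕ) (Polynomial.C ((a.factorial : ℂ)⁻¹)) * Q ^ (2*a+1)))
      = ∑ a ∈ σ.support, MvPowerSeries.coeff (σ - Finsupp.single a 1)
          (MvPowerSeries.C (σ := ℕ) (Polynomial.C ((a.factorial : ℂ)⁻¹)) * Q ^ (2*a+1)) := rfl
  rw [e1, e2]
  apply Finset.sum_congr rfl
  intro a _
  rw [MvPowerSeries.coeff_C_mul]

lemma coeff_pow_congr (f g : M) (d : ℕ)
    (h : ∀ τ : ℕ →₀ ℕ, τ.degree ≤ d → MvPowerSeries.coeff τ f = MvPowerSeries.coeff τ g) :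
    ∀ (m : ℕ) (τ : ℕ →₀ ℕ), τ.degree ≤ d
      → MvPowerSeries.coeff τ (f ^ m) = MvPowerSeries.coeff τ (g ^ m) := by
  intro m
  induction m with
  | zero => intro τ _; rfl
  | succ m ih =>
    intro τ hτ
    rw [pow_succ, pow_succ, MvPowerSeries.coeff_mul, MvPowerSeries.coeff_mul]
    apply Finset.sum_congr rfl
    intro p hp
    rw [Finset.HasAntidiagonal.mem_antidiagonal] at hp
    have hdeg : (p.1 : ℕ →₀ ℕ).degree + (p.2 : ℕ →₀ ℕ).degree = τ.degree := by
      rw [← degree_add, hp]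
    rw [ih p.1 (by omega), h p.2 (by omega)]

end

/-- If `Q ∈ ℂ[x][[T₁,T₃,…]]` satisfies `Q = -x/2 + ∑_{a≥0} T_{2a+1}Q^{2a+1}/a!`, then `Q`
is unique, `Q(x, 0) = -x/2`, and `∂Q/∂T_{2a+1} = (Q^{2a}/a!)·∂Q/∂T₁` for every `a ≥ 0`. -/
theorem stmt3 (Q : MvPowerSeries ℕ (Polynomial ℂ))
    (hQ : Q = MvPowerSeries.C (σ := ℕ) (R := Polynomial ℂ) (Polynomial.C (-(2⁻¹ : ℂ)) * Polynomial.X)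
      + rhsSum Q) :
    (∀ Q' : MvPowerSeries ℕ (Polynomial ℂ),
      Q' = MvPowerSeries.C (σ := ℕ) (R := Polynomial ℂ) (Polynomial.C (-(2⁻¹ : ℂ)) * Polynomial.X)
        + rhsSum Q' → Q' = Q) ∧
    MvPowerSeries.constantCoeff (σ := ℕ) (R := Polynomial ℂ) Q
      = Polynomial.C (-(2⁻¹ : ℂ)) * Polynomial.X ∧
    ∀ a : ℕ, pd a Q
      = MvPowerSeries.C (σ := ℕ) (R := Polynomial ℂ) (Polynomial.C ((a.factorial : ℂ)⁻¹))
          * Q ^ (2*a) * pd 0 Q := by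
  refine ⟨?_, ?_, ?_⟩
  · -- uniqueness
    intro Q' hQ'
    have key : ∀ n : ℕ, ∀ σ : ℕ →₀ ℕ, σ.degree ≤ n
        → MvPowerSeries.coeff σ Q' = MvPowerSeries.coeff σ Q := by
      intro n
      induction n using Nat.strong_induction_on with
      | _ n IH =>
        intro σ hσ
        conv_lhs => rw [hQ']
        conv_rhs => rw [hQ]
        rw [map_add, map_add]
        refine congrArg (_ + ·) ?_
        have e1 : MvPowerSeries.coeff σ (rhsSum Q') = ∑ a ∈ σ.support,
            Polynomial.C ((a.factorial : ℂ)⁻¹)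
              * MvPowerSeries.coeff (σ - Finsupp.single a 1) (Q' ^ (2*a+1)) := rfl
        have e2 : MvPowerSeries.coeff σ (rhsSum Q) = ∑ a ∈ σ.support,
            Polynomial.C ((a.factorial : ℂ)⁻¹)
              * MvPowerSeries.coeff (σ - Finsupp.single a 1) (Q ^ (2*a+1)) := rfl
        rw [e1, e2]
        apply Finset.sum_congr rfl
        intro a ha
        have ha' : σ a ≠ 0 := Finsupp.mem_support_iff.mp ha
        have hle : Finsupp.single a 1 ≤ σ :=
          Finsupp.single_le_iff.mpr (Nat.one_le_iff_ne_zero.mpr ha')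
        have hdeg : (σ - Finsupp.single a 1).degree + 1 = σ.degree := by
          conv_rhs => rw [← tsub_add_cancel_of_le hle]
          rw [degree_add, degree_single]
        have hlt : (σ - Finsupp.single a 1).degree < n := by omega
        refine congrArg (_ * ·) ?_
        exact coeff_pow_congr Q' Q ((σ - Finsupp.single a 1).degree)
          (fun τ hτ => IH _ hlt τ hτ) (2*a+1) _ le_rfl
    exact MvPowerSeries.ext fun σ => key σ.degree σ le_rfl
  · -- constant coefficient
    conv_lhs => rw [hQ]
    rw [map_add, MvPowerSeries.constantCoeff_C, rhsSum_eq, constantCoeff_rhsF, add_zero]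
  · -- the PDE hierarchy
    set F : ℕ → MvPowerSeries ℕ (Polynomial ℂ) := fun a =>
      MvPowerSeries.C (σ := ℕ) (Polynomial.C ((a.factorial : ℂ)⁻¹)) * Q ^ (2*a+1) with hF
    set G : ℕ → MvPowerSeries ℕ (Polynomial ℂ) := fun a =>
      MvPowerSeries.C (σ := ℕ) (Polynomial.C ((a.factorial : ℂ)⁻¹))
        * (((2*a : ℕ) : MvPowerSeries ℕ (Polynomial ℂ)) + 1) * Q ^ (2*a) with hG
    have hFpd : ∀ i a, pd i (F a) = G a * pd i Q := by
      intro i a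
      rw [hF, hG]
      dsimp only
      rw [pd_C_mul i _ (Q ^ (2*a+1)), pd_pow]
      ring
    have hpd : ∀ i, pd i Q = F i + rhsF G * pd i Q := by
      intro i
      conv_lhs => rw [hQ]
      rw [pd_add, pd_C, zero_add, rhsSum_eq, pd_rhsF]
      rw [show (fun a => pd i ((fun a =>
        MvPowerSeries.C (σ := ℕ) (Polynomial.C ((a.factorial : ℂ)⁻¹)) * Q ^ (2*a+1)) a))
          = fun a => G a * pd i Q from funext fun a => by rw [← hF]; exact hFpd i a]
      rw [rhsF_mul]
    have hsub : ∀ i, (1 - rhsF G) * pd i Q = F i := by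
      intro i
      have h := hpd i
      linear_combination h
    have hcc : MvPowerSeries.constantCoeff (σ := ℕ) (1 - rhsF G) = 1 := by
      rw [map_sub, map_one, constantCoeff_rhsF, sub_zero]
    set J : MvPowerSeries ℕ (Polynomial ℂ) := MvPowerSeries.invOfUnit (1 - rhsF G) 1 with hJdef
    have hJ : (1 - rhsF G) * J = 1 :=
      MvPowerSeries.mul_invOfUnit _ 1 (by rw [hcc]; rfl)
    have hpdeq : ∀ i, pd i Q = J * F i := by
      intro i
      calc pd i Q = (1 - rhsF G) * J * pd i Q := by rw [hJ, one_mul]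
      _ = (1 - rhsF G) * pd i Q * J := by ring
      _ = F i * J := by rw [hsub i]
      _ = J * F i := mul_comm _ _
    intro a
    rw [hpdeq a, hpdeq 0]
    rw [hF]
    dsimp only
    have hc0 : (Polynomial.C (((Nat.factorial 0 : ℕ) : ℂ)⁻¹) : Polynomial ℂ) = 1 := by
      simp [Nat.factorial_zero]
    rw [hc0, map_one, one_mul]
    ring
end

section
/- Let v ∈ ℚ[[t₀, t₁, t₂, …]] be defined by v = t₀ + ∑_{k ≥ 2} (1/k) ∑_{i₁+⋯+i_k = k−1, i_j ≥ 0} (t_{i₁}/i₁!)⋯(t_{i_k}/i_k!). Then v satisfies the fixed-point (genus-zero string) equation v = ∑_{i ≥ 0} t_i · v^i / i!, and it is the unique solution of this equation in ℚ[[t₀, t₁, …]] with zero constant term. -/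
open Finset

/- We work in `ℚ[[t₀, t₁, t₂, …]]`, modelled as `MvPowerSeries ℕ ℚ`. -/

/-- The series `v = t₀ + ∑_{k≥2} (1/k) ∑_{i₁+⋯+i_k=k-1, i_j≥0} (t_{i₁}/i₁!)⋯(t_{i_k}/i_k!)`,
defined coefficientwise: a monomial `σ` of total degree `k ≥ 2` receives, from each tuple
`(i₁,…,i_k)` with `∑ i_j = k-1` whose associated monomial is `σ`, the contribution
`(1/k)·∏_j 1/i_j!`; the degree-one part is `t₀`. -/
noncomputable def vSeries : MvPowerSeries ℕ ℚ := fun σ =>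
  if 2 ≤ σ.sum fun _ e => e then
    ((σ.sum fun _ e => e : ℕ) : ℚ)⁻¹ *
      ∑ t ∈ Finset.Nat.antidiagonalTuple (σ.sum fun _ e => e) ((σ.sum fun _ e => e) - 1),
        (if (∑ j, Finsupp.single (t j) 1) = σ
          then ∏ j, ((t j).factorial : ℚ)⁻¹ else 0)
  else if σ = Finsupp.single 0 1 then 1 else 0

/-- The series `∑_{i ≥ 0} t_i·w^i/i!`, defined coefficientwise (for a fixed monomial `σ`
only the finitely many `i` with `σ i ≥ 1` contribute). -/
noncomputable def stringRHS (w : MvPowerSeries ℕ ℚ) : MvPowerSeries ℕ ℚ := fun σ =>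
  ∑ i ∈ σ.support,
    ((i.factorial : ℚ)⁻¹) * MvPowerSeries.coeff (σ - Finsupp.single i 1) (w ^ i)

namespace Stmt6Aux

open Classical in
noncomputable instance : ∀ p : Prop, Decidable p := fun p => Classical.dec p

/-- Total degree of a monomial. -/
def deg (σ : ℕ →₀ ℕ) : ℕ := σ.sum fun _ e => e

/-- Monomial associated to a list of indices. -/
noncomputable def mon (l : List ℕ) : ℕ →₀ ℕ := (l.map fun i => Finsupp.single i 1).sum

/-- Weight of a list: product of inverse factorials. -/
noncomputable def wt (l : List ℕ) : ℚ := (l.map fun i => ((i.factorial : ℚ)⁻¹)).prod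

/-- Łukasiewicz sequences. -/
def IsLuk (l : List ℕ) : Prop :=
  l ≠ [] ∧ l.sum + 1 = l.length ∧ ∀ k < l.length, k ≤ (l.take k).sum

/-- Strict suffix condition. -/
def Suff (l : List ℕ) : Prop := ∀ k < l.length, (l.drop k).sum + k + 1 ≤ l.length

noncomputable def lists (n m : ℕ) : Finset (List ℕ) :=
  (Finset.Nat.antidiagonalTuple n m).image List.ofFn

noncomputable def Luk (σ : ℕ →₀ ℕ) : Finset (List ℕ) :=
  (lists (deg σ) (deg σ - 1)).filter fun l => IsLuk l ∧ mon l = σ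

noncomputable def Cat (i : ℕ) (τ : ℕ →₀ ℕ) : Finset (List ℕ) :=
  (lists (deg τ) (deg τ - i)).filter fun r => r.sum + i = r.length ∧ Suff r ∧ mon r = τ

lemma deg_add (σ τ : ℕ →₀ ℕ) : deg (σ + τ) = deg σ + deg τ :=
  Finsupp.sum_add_index' (fun _ => rfl) (fun _ _ _ => rfl)

lemma deg_single (i k : ℕ) : deg (Finsupp.single i k) = k :=
  Finsupp.sum_single_index rfl

lemma deg_eq_zero {σ : ℕ →₀ ℕ} (h : deg σ = 0) : σ = 0 := by
  have h2 : ∑ a ∈ σ.support, σ a = 0 := h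
  rw [Finset.sum_eq_zero_iff] at h2
  ext a
  by_cases ha : a ∈ σ.support
  · exact h2 a ha
  · simpa [Finsupp.mem_support_iff] using ha

@[simp] lemma mon_nil : mon [] = 0 := rfl

@[simp] lemma mon_cons (a : ℕ) (l : List ℕ) :
    mon (a :: l) = Finsupp.single a 1 + mon l := by simp [mon]

lemma mon_append (l₁ l₂ : List ℕ) : mon (l₁ ++ l₂) = mon l₁ + mon l₂ := by
  simp [mon]

lemma deg_mon (l : List ℕ) : deg (mon l) = l.length := by
  induction l with
  | nil => simp [deg]
  | cons a t ih => simp [mon_cons, deg_add, deg_single, ih]; omega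

@[simp] lemma wt_nil : wt [] = 1 := rfl

@[simp] lemma wt_cons (a : ℕ) (l : List ℕ) :
    wt (a :: l) = ((a.factorial : ℚ)⁻¹) * wt l := by simp [wt]

lemma wt_append (l₁ l₂ : List ℕ) : wt (l₁ ++ l₂) = wt l₁ * wt l₂ := by
  simp [wt]

lemma mem_lists {l : List ℕ} {n m : ℕ} :
    l ∈ lists n m ↔ l.length = n ∧ l.sum = m := by
  constructor
  · rintro hl
    obtain ⟨t, ht, rfl⟩ := Finset.mem_image.1 hl
    rw [Finset.Nat.mem_antidiagonalTuple] at ht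
    refine ⟨List.length_ofFn (f := t), ?_⟩
    rw [List.sum_ofFn]; exact ht
  · rintro ⟨hlen, hsum⟩
    subst hlen
    refine Finset.mem_image.2 ⟨l.get, ?_, List.ofFn_get l⟩
    rw [Finset.Nat.mem_antidiagonalTuple, ← List.sum_ofFn (f := l.get), List.ofFn_get]
    exact hsum

lemma mem_Luk {l : List ℕ} {σ : ℕ →₀ ℕ} :
    l ∈ Luk σ ↔ IsLuk l ∧ mon l = σ := by
  constructor
  · exact fun h => (Finset.mem_filter.1 h).2
  · rintro ⟨hluk, hmon⟩
    refine Finset.mem_filter.2 ⟨mem_lists.2 ⟨?_, ?_⟩, hluk, hmon⟩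
    · rw [← hmon, deg_mon]
    · have := hluk.2.1
      have : l.length = deg σ := by rw [← hmon, deg_mon]
      omega
  
lemma mem_Cat {r : List ℕ} {i : ℕ} {τ : ℕ →₀ ℕ} :
    r ∈ Cat i τ ↔ r.sum + i = r.length ∧ Suff r ∧ mon r = τ := by
  constructor
  · exact fun h => (Finset.mem_filter.1 h).2
  · rintro ⟨hsum, hsf, hmon⟩
    refine Finset.mem_filter.2 ⟨mem_lists.2 ⟨?_, ?_⟩, hsum, hsf, hmon⟩
    · rw [← hmon, deg_mon]
    · have : r.length = deg τ := by rw [← hmon, deg_mon]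
      omega

lemma sum_take_add (l : List ℕ) (a b : ℕ) :
    (l.take (a + b)).sum = (l.take a).sum + ((l.drop a).take b).sum := by
  rw [List.take_add, List.sum_append]

lemma sum_take_mono (l : List ℕ) {a b : ℕ} (h : a ≤ b) :
    (l.take a).sum ≤ (l.take b).sum := by
  have : b = a + (b - a) := by omega
  rw [this, sum_take_add]; omega

lemma sum_take_drop (l : List ℕ) (k : ℕ) :
    (l.take k).sum + (l.drop k).sum = l.sum :=
  List.sum_take_add_sum_drop l k

lemma luk_suff {l : List ℕ} (h : IsLuk l) : Suff l := by
  intro k hk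
  have h1 := h.2.2 k hk
  have h2 := sum_take_drop l k
  have h3 : (l.drop k).length = l.length - k := List.length_drop
  have h4 := h.2.1
  omega

lemma suff_luk {l : List ℕ} (hs : l.sum + 1 = l.length) (hsf : Suff l) : IsLuk l := by
  refine ⟨?_, hs, ?_⟩
  · intro hnil; subst hnil; simp at hs
  · intro k hk
    have h1 := hsf k hk
    have h2 := sum_take_drop l k
    have h3 : (l.drop k).length = l.length - k := List.length_drop
    omega

lemma suff_sum_le {l : List ℕ} (h : Suff l) : l.sum ≤ l.length := by
  cases l with
  | nil => simp
  | cons a t =>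
    have h0 := h 0 (by simp)
    rw [List.drop_zero] at h0
    omega

lemma suff_drop {l : List ℕ} (h : Suff l) (k : ℕ) : Suff (l.drop k) := by
  intro j hj
  rw [List.drop_drop]
  have h3 : (l.drop k).length = l.length - k := List.length_drop
  have h4 : (l.drop (k + j)).length = l.length - (k + j) := List.length_drop
  have := h (k + j) (by omega)
  omega

lemma suff_append {a b : List ℕ} (ha : Suff a) (hb : Suff b) : Suff (a ++ b) := by
  intro k hk
  rw [List.length_append] at hk ⊢
  rw [List.drop_append, List.sum_append]
  by_cases h : k ≤ a.length
  · have h1 : k - a.length = 0 := by omega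
    rw [h1, List.drop_zero]
    rcases Nat.eq_or_lt_of_le h with h2 | h2
    · have h3 : a.drop k = [] := List.drop_eq_nil_of_le (by omega)
      have hb0 := hb 0 (by omega)
      rw [List.drop_zero] at hb0
      rw [h3]
      simp only [List.nil_append, List.sum_nil, Nat.zero_add]
      omega
    · have := ha k h2
      have hble := suff_sum_le hb
      omega
  · have h1 : a.drop k = [] := List.drop_eq_nil_of_le (by omega)
    rw [h1]
    simp only [List.nil_append, List.sum_nil, Nat.zero_add]
    have := hb (k - a.length) (by omega)
    omega

section Stage2

lemma mon_rotate (l : List ℕ) (r : ℕ) : mon (l.rotate r) = mon l := by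
  unfold mon
  exact ((l.rotate_perm r).map _).sum_eq

lemma wt_rotate (l : List ℕ) (r : ℕ) : wt (l.rotate r) = wt l := by
  unfold wt
  exact ((l.rotate_perm r).map _).prod_eq

lemma sum_rotate (l : List ℕ) (r : ℕ) : (l.rotate r).sum = l.sum :=
  (l.rotate_perm r).sum_eq

lemma rot_take1 (l : List ℕ) {r k : ℕ} (h1 : r ≤ l.length) (h2 : k ≤ l.length - r) :
    ((l.rotate r).take k).sum + (l.take r).sum = (l.take (r + k)).sum := by
  rw [List.rotate_eq_drop_append_take h1, List.take_append]
  have hlen : (l.drop r).length = l.length - r := List.length_drop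
  have h3 : k - (l.drop r).length = 0 := by omega
  rw [h3, List.take_zero, List.append_nil]
  rw [sum_take_add]
  omega

lemma rot_take2 (l : List ℕ) {r k : ℕ} (h1 : r ≤ l.length) (h2 : l.length - r ≤ k)
    (h3 : k ≤ l.length) :
    ((l.rotate r).take k).sum + (l.take r).sum = l.sum + (l.take (k - (l.length - r))).sum := by
  rw [List.rotate_eq_drop_append_take h1, List.take_append]
  have hlen : (l.drop r).length = l.length - r := List.length_drop
  have h4 : (l.drop r).take k = l.drop r := List.take_of_length_le (by omega)
  rw [h4, List.sum_append, hlen, List.take_take]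
  have h5 : min (k - (l.length - r)) r = k - (l.length - r) := by omega
  rw [h5]
  have h6 := sum_take_drop l r
  omega

/-- Characterization: the rotation of `l` by `r` is Łukasiewicz iff `r` is the least
argmin of `j ↦ (l.take j).sum - j` on `[0, n)`. -/
lemma isLuk_rotate_iff (l : List ℕ) {n : ℕ} (hn : l.length = n) (hs : l.sum + 1 = n)
    {r : ℕ} (hr : r < n) :
    IsLuk (l.rotate r) ↔
      ((∀ j, r ≤ j → j < n → (l.take r).sum + j ≤ (l.take j).sum + r) ∧
       (∀ j < r, (l.take r).sum + j < (l.take j).sum + r)) := by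
  subst hn
  have hr' : r ≤ l.length := by omega
  have hlenrot : (l.rotate r).length = l.length := List.length_rotate l r
  have hsumrot : (l.rotate r).sum = l.sum := sum_rotate l r
  have hnonnil : l.rotate r ≠ [] := by
    intro h
    rw [h] at hlenrot
    simp at hlenrot
    omega
  constructor
  · rintro ⟨-, -, hpre⟩
    constructor
    · intro j hrj hjn
      set k := j - r with hk
      have hkk : k ≤ l.length - r := by omega
      have heq := rot_take1 l hr' hkk
      have hrk : r + k = j := by omega
      rw [hrk] at heq
      have := hpre k (by omega)
      omega
    · intro j hj
      rcases Nat.eq_zero_or_pos j with rfl | hj1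
      · -- use k = n - r
        have hkk : (l.length - r) ≤ l.length - r := le_refl _
        have heq := rot_take1 l hr' hkk
        have hrk : r + (l.length - r) = l.length := by omega
        rw [hrk, List.take_length] at heq
        have := hpre (l.length - r) (by omega)
        simp only [List.take_zero, List.sum_nil]
        omega
      · -- use k = j + (n - r)
        have heq := rot_take2 l hr' (k := j + (l.length - r)) (by omega) (by omega)
        have h5 : j + (l.length - r) - (l.length - r) = j := by omega
        rw [h5] at heq
        have := hpre (j + (l.length - r)) (by omega)
        omega
  · rintro ⟨hge, hlt⟩
    refine ⟨hnonnil, by omega, ?_⟩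
    intro k hk
    rw [hlenrot] at hk
    by_cases hcase : k ≤ l.length - r
    · have heq := rot_take1 l (k := k) hr' (by omega)
      by_cases hrk : r + k < l.length
      · have := hge (r + k) (by omega) hrk
        omega
      · -- r + k = length, so k = length - r and r ≥ 1 (since k < length)
        have hrkn : r + k = l.length := by omega
        have hr1 : 1 ≤ r := by omega
        have := hlt 0 (by omega)
        simp only [List.take_zero, List.sum_nil] at this
        rw [hrkn, List.take_length] at heq
        omega
    · have heq := rot_take2 l hr' (k := k) (by omega) (by omega)
      set j := k - (l.length - r) with hj
      have hjr : j < r := by omega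
      have hj1 : 1 ≤ j := by omega
      have := hlt j hjr
      omega

/-- Existence and uniqueness of the Łukasiewicz rotation. -/
lemma exists_luk_rotate (l : List ℕ) {n : ℕ} (hn : l.length = n) (hs : l.sum + 1 = n) :
    ∃ r < n, IsLuk (l.rotate r) ∧ ∀ r' < n, IsLuk (l.rotate r') → r' = r := by
  subst hn
  have hn1 : 1 ≤ l.length := by omega
  set f : ℕ → ℤ := fun j => ((l.take j).sum : ℤ) - j with hf
  have hex : ∃ r, r < l.length ∧ ∀ j < l.length, f r ≤ f j := by
    obtain ⟨r₀, hr₀, hmin⟩ := Finset.exists_min_image (Finset.range l.length) f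
      ⟨0, Finset.mem_range.2 (by omega)⟩
    exact ⟨r₀, Finset.mem_range.1 hr₀, fun j hj => hmin j (Finset.mem_range.2 hj)⟩
  have hrn : Nat.find hex < l.length := (Nat.find_spec hex).1
  have hrmin : ∀ j < l.length, f (Nat.find hex) ≤ f j := (Nat.find_spec hex).2
  set r := Nat.find hex with hrdef
  have hC : (∀ j, r ≤ j → j < l.length → (l.take r).sum + j ≤ (l.take j).sum + r) ∧
      (∀ j < r, (l.take r).sum + j < (l.take j).sum + r) := by
    constructor
    · intro j _ hjn
      have := hrmin j hjn
      simp only [hf] at this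
      omega
    · intro j hjr
      have hnotP := Nat.find_min hex (show j < r from hjr)
      push_neg at hnotP
      have hjn : j < l.length := by omega
      obtain ⟨j', hj'n, hj'⟩ := hnotP hjn
      have h1 := hrmin j' hj'n
      simp only [hf] at h1 hj'
      omega
  refine ⟨r, hrn, (isLuk_rotate_iff l rfl hs hrn).2 hC, ?_⟩
  intro r' hr'n hluk'
  have hC' := (isLuk_rotate_iff l rfl hs hr'n).1 hluk'
  -- r' satisfies the argmin property, so r ≤ r'
  have hP' : r' < l.length ∧ ∀ j < l.length, f r' ≤ f j := by
    refine ⟨hr'n, fun j hjn => ?_⟩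
    by_cases hj : r' ≤ j
    · have := hC'.1 j hj hjn
      simp only [hf]; omega
    · have := hC'.2 j (by omega)
      simp only [hf]; omega
  have hle : r ≤ r' := Nat.find_min' hex hP'
  rcases Nat.eq_or_lt_of_le hle with h | h
  · omega
  · exfalso
    have h1 := hC'.2 r h
    have h2 := hrmin r' hr'n
    simp only [hf] at h2
    omega

/-- The cycle lemma, in summed form. -/
lemma cycle_sum (n : ℕ) (hn : 1 ≤ n) (F : List ℕ → ℚ)
    (hF : ∀ l r, F (l.rotate r) = F l) :
    ∑ s ∈ lists n (n - 1), F s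
      = n * ∑ l ∈ (lists n (n - 1)).filter (fun l => IsLuk l), F l := by
  have key : ∑ p ∈ ((lists n (n - 1)).filter (fun l => IsLuk l)) ×ˢ Finset.range n,
      F p.1 = ∑ s ∈ lists n (n - 1), F s := by
    refine Finset.sum_nbij (fun p => p.1.rotate p.2) ?_ ?_ ?_ ?_
    · rintro ⟨l, r⟩ hmem
      rw [Finset.mem_product] at hmem
      obtain ⟨hl, -⟩ := hmem
      have hl' := mem_lists.1 (Finset.mem_filter.1 hl).1
      exact mem_lists.2 (by rw [List.length_rotate, sum_rotate]; exact hl')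
    · rintro ⟨l, r⟩ hmem ⟨l', r'⟩ hmem' heq
      simp only [Finset.coe_product, Set.mem_prod, Finset.mem_coe, Finset.mem_filter,
        Finset.mem_range] at hmem hmem'
      obtain ⟨⟨hlmem, hluk⟩, hr⟩ := hmem
      obtain ⟨⟨hlmem', hluk'⟩, hr'⟩ := hmem'
      obtain ⟨hllen, hlsum⟩ := mem_lists.1 hlmem
      obtain ⟨hllen', hlsum'⟩ := mem_lists.1 hlmem'
      simp only at heq
      set s := l.rotate r with hsdef
      have hslen : s.length = n := by rw [List.length_rotate]; exact hllen
      have hssum : s.sum + 1 = n := by rw [sum_rotate]; omega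
      have hback : ∀ (m : ℕ) (a : List ℕ), a.length = n → m < n → (a.rotate m).rotate ((n - m) % n) = a := by
        intro m a halen hm
        rw [List.rotate_rotate, ← List.rotate_mod]
        have : (m + (n - m) % n) % a.length = 0 := by
          rw [halen]
          rcases Nat.eq_zero_or_pos m with rfl | hm1
          · simp
          · have : (n - m) % n = n - m := Nat.mod_eq_of_lt (by omega)
            rw [this]
            have : m + (n - m) = n := by omega
            rw [this, Nat.mod_self]
        rw [this, List.rotate_zero]
      have h1 : s.rotate ((n - r) % n) = l := by
        rw [hsdef]; exact hback r l hllen hr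
      have h2 : s.rotate ((n - r') % n) = l' := by
        rw [heq]; exact hback r' l' hllen' hr'
      obtain ⟨r₀, hr₀n, -, huniq⟩ := exists_luk_rotate s hslen hssum
      have e1 : (n - r) % n = r₀ :=
        huniq _ (Nat.mod_lt _ (by omega)) (by rw [h1]; exact hluk)
      have e2 : (n - r') % n = r₀ :=
        huniq _ (Nat.mod_lt _ (by omega)) (by rw [h2]; exact hluk')
      have hrr' : r = r' := by
        rcases Nat.eq_zero_or_pos r with rfl | hr1 <;>
          rcases Nat.eq_zero_or_pos r' with rfl | hr1'
        · rfl
        all_goals {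
          simp -failIfUnchanged only [Nat.sub_zero, Nat.mod_self] at e1 e2
          first
          | (rw [Nat.mod_eq_of_lt (by omega : n - r' < n)] at e2; omega)
          | (rw [Nat.mod_eq_of_lt (by omega : n - r < n)] at e1;
             try rw [Nat.mod_eq_of_lt (by omega : n - r' < n)] at e2;
             omega) }
      subst hrr'
      have : l = l' := by rw [← h1, ← h2, heq]
      simp [this]
    · intro s hs
      simp only [Finset.mem_coe] at hs
      obtain ⟨hslen, hssum⟩ := mem_lists.1 hs
      have hssum' : s.sum + 1 = n := by omega
      obtain ⟨r₀, hr₀n, hluk₀, -⟩ := exists_luk_rotate s hslen hssum'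
      set l := s.rotate r₀ with hldef
      have hlmem : l ∈ (lists n (n - 1)).filter (fun l => IsLuk l) := by
        refine Finset.mem_filter.2 ⟨mem_lists.2 ⟨?_, ?_⟩, hluk₀⟩
        · rw [hldef, List.length_rotate]; exact hslen
        · rw [hldef, sum_rotate]; exact hssum
      refine ⟨((l, (n - r₀) % n) : List ℕ × ℕ), ?_, ?_⟩
      · simp only [Finset.coe_product, Set.mem_prod, Finset.mem_coe, Finset.mem_range]
        exact ⟨hlmem, Nat.mod_lt _ (by omega)⟩
      · simp only
        rw [hldef, List.rotate_rotate, ← List.rotate_mod]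
        have : (r₀ + (n - r₀) % n) % s.length = 0 := by
          rw [hslen]
          rcases Nat.eq_zero_or_pos r₀ with rfl | hr1
          · simp
          · rw [Nat.mod_eq_of_lt (by omega : n - r₀ < n)]
            have : r₀ + (n - r₀) = n := by omega
            rw [this, Nat.mod_self]
        rw [this, List.rotate_zero]
    · rintro ⟨l, r⟩ -
      simp only
      rw [hF]
  rw [← key, Finset.sum_product, Finset.mul_sum]
  refine Finset.sum_congr rfl fun l _ => ?_
  have hconst : ∀ y ∈ Finset.range n, F ((l, y).1) = F l := fun _ _ => rfl
  rw [Finset.sum_congr rfl hconst, Finset.sum_const, Finset.card_range, nsmul_eq_mul]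

end Stage2

section Stage3

noncomputable def splitIdx (r : List ℕ) : ℕ :=
  if h : ∃ k, (r.take k).sum + 1 ≤ k then Nat.find h else 0

lemma split_spec (r : List ℕ) (i : ℕ) (hsum : r.sum + (i + 1) = r.length) (hsf : Suff r) :
    1 ≤ splitIdx r ∧ splitIdx r ≤ r.length ∧ IsLuk (r.take (splitIdx r)) ∧
      (r.drop (splitIdx r)).sum + i = (r.drop (splitIdx r)).length ∧ Suff (r.drop (splitIdx r)) := by
  have hex : ∃ k, (r.take k).sum + 1 ≤ k := ⟨r.length, by rw [List.take_length]; omega⟩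
  have hidx : splitIdx r = Nat.find hex := by
    rw [splitIdx, dif_pos hex]
  set k₀ := Nat.find hex with hk₀
  have hQ : (r.take k₀).sum + 1 ≤ k₀ := Nat.find_spec hex
  have hnotQ : ∀ j < k₀, j ≤ (r.take j).sum := by
    intro j hj
    have := Nat.find_min hex hj
    omega
  have hk₀1 : 1 ≤ k₀ := by
    by_contra h
    have h0 : k₀ = 0 := by omega
    rw [h0] at hQ
    simp at hQ
  have hk₀len : k₀ ≤ r.length := Nat.find_min' hex (by rw [List.take_length]; omega)
  have hmono : (r.take (k₀ - 1)).sum ≤ (r.take k₀).sum := sum_take_mono r (by omega)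
  have hprev : k₀ - 1 ≤ (r.take (k₀ - 1)).sum := hnotQ (k₀ - 1) (by omega)
  have hQeq : (r.take k₀).sum + 1 = k₀ := by omega
  have hlentake : (r.take k₀).length = k₀ := by
    rw [List.length_take]; omega
  have hluk : IsLuk (r.take k₀) := by
    refine ⟨?_, by rw [hlentake]; exact hQeq, ?_⟩
    · intro h
      have := congrArg List.length h
      simp [hlentake] at this
      omega
    · intro j hj
      rw [hlentake] at hj
      rw [List.take_take, min_eq_left (by omega : j ≤ k₀)]
      exact hnotQ j hj
  have hdropsum := sum_take_drop r k₀
  have hdroplen : (r.drop k₀).length = r.length - k₀ := List.length_drop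
  rw [hidx]
  exact ⟨hk₀1, hk₀len, hluk, by omega, suff_drop hsf k₀⟩

lemma split_eq (l g : List ℕ) (hl : IsLuk l) : splitIdx (l ++ g) = l.length := by
  have hQl : ((l ++ g).take l.length).sum + 1 ≤ l.length := by
    rw [List.take_left]
    exact le_of_eq hl.2.1
  have hex : ∃ k, ((l ++ g).take k).sum + 1 ≤ k := ⟨l.length, hQl⟩
  have hidx : splitIdx (l ++ g) = Nat.find hex := by rw [splitIdx, dif_pos hex]
  rw [hidx]
  have h1 : Nat.find hex ≤ l.length := Nat.find_min' hex hQl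
  have h2 : ¬ (Nat.find hex < l.length) := by
    intro hlt
    have hspec := Nat.find_spec hex
    have heq2 : (l ++ g).take (Nat.find hex) = l.take (Nat.find hex) :=
      List.take_append_of_le_length (by omega)
    rw [heq2] at hspec
    have := hl.2.2 (Nat.find hex) (by omega)
    omega
  omega

lemma cat_zero (τ : ℕ →₀ ℕ) : Cat 0 τ = if τ = 0 then {[]} else ∅ := by
  split_ifs with h
  · subst h
    ext r
    rw [mem_Cat, Finset.mem_singleton]
    constructor
    · rintro ⟨hsum, hsf, hmon⟩
      have hlen : r.length = deg (0 : ℕ →₀ ℕ) := by rw [← hmon, deg_mon]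
      have hdeg0 : deg (0 : ℕ →₀ ℕ) = 0 := rfl
      rw [hdeg0] at hlen
      exact List.length_eq_zero_iff.1 hlen
    · rintro rfl
      exact ⟨rfl, fun k hk => by simp at hk, rfl⟩
  · ext r
    rw [mem_Cat]
    simp only [Finset.notMem_empty, iff_false]
    rintro ⟨hsum, hsf, hmon⟩
    have hne : r ≠ [] := by
      rintro rfl
      exact h (by rw [← hmon]; rfl)
    have hpos : 0 < r.length := List.length_pos_iff.2 hne
    have := hsf 0 hpos
    rw [List.drop_zero] at this
    omega

lemma cat_succ (i : ℕ) (τ : ℕ →₀ ℕ) :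
    ∑ r ∈ Cat (i + 1) τ, wt r
      = ∑ p ∈ Finset.HasAntidiagonal.antidiagonal τ, (∑ l ∈ Luk p.1, wt l) * (∑ g ∈ Cat i p.2, wt g) := by
  have hre : ∀ p : (ℕ →₀ ℕ) × (ℕ →₀ ℕ), (∑ l ∈ Luk p.1, wt l) * (∑ g ∈ Cat i p.2, wt g)
      = ∑ q ∈ Luk p.1 ×ˢ Cat i p.2, wt q.1 * wt q.2 := by
    intro p
    rw [Finset.sum_mul_sum, Finset.sum_product]
  simp_rw [hre]
  rw [← Finset.sum_sigma (Finset.HasAntidiagonal.antidiagonal τ) (fun p => Luk p.1 ×ˢ Cat i p.2)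
    (fun x => wt x.2.1 * wt x.2.2)]
  refine (Finset.sum_nbij' (fun r => (⟨(mon (r.take (splitIdx r)), mon (r.drop (splitIdx r))),
      (r.take (splitIdx r), r.drop (splitIdx r))⟩ : Σ _p : (ℕ →₀ ℕ) × (ℕ →₀ ℕ), List ℕ × List ℕ))
      (fun x => x.2.1 ++ x.2.2) ?_ ?_ ?_ ?_ ?_)
  · intro r hr
    obtain ⟨hsum, hsf, hmon⟩ := mem_Cat.1 hr
    obtain ⟨h1, h2, h3, h4, h5⟩ := split_spec r i hsum hsf
    refine Finset.mem_sigma.2 ⟨?_, ?_⟩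
    · rw [Finset.HasAntidiagonal.mem_antidiagonal]
      rw [← mon_append, List.take_append_drop]
      exact hmon
    · refine Finset.mem_product.2 ⟨mem_Luk.2 ⟨h3, rfl⟩, mem_Cat.2 ⟨h4, h5, rfl⟩⟩
  · rintro ⟨⟨p1, p2⟩, l, g⟩ hx
    obtain ⟨hp, hlg⟩ := Finset.mem_sigma.1 hx
    rw [Finset.HasAntidiagonal.mem_antidiagonal] at hp
    obtain ⟨hl, hg⟩ := Finset.mem_product.1 hlg
    obtain ⟨hluk, hmonl⟩ := mem_Luk.1 hl
    obtain ⟨hsumg, hsfg, hmong⟩ := mem_Cat.1 hg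
    refine mem_Cat.2 ⟨?_, suff_append (luk_suff hluk) hsfg, ?_⟩
    · rw [List.sum_append, List.length_append]
      have := hluk.2.1
      omega
    · rw [mon_append, hmonl, hmong]
      exact hp
  · intro r hr
    simp only [List.take_append_drop]
  · rintro ⟨⟨p1, p2⟩, l, g⟩ hx
    obtain ⟨hp, hlg⟩ := Finset.mem_sigma.1 hx
    obtain ⟨hl, hg⟩ := Finset.mem_product.1 hlg
    obtain ⟨hluk, hmonl⟩ := mem_Luk.1 hl
    obtain ⟨hsumg, hsfg, hmong⟩ := mem_Cat.1 hg
    have hsp : splitIdx (l ++ g) = l.length := split_eq l g hluk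
    simp only [hsp, List.take_left, List.drop_left]
    have hml : mon l = p1 := hmonl
    have hmg : mon g = p2 := hmong
    subst hml
    subst hmg
    rfl
  · intro r hr
    simp only
    rw [← wt_append, List.take_append_drop]

end Stage3

section Stage4

lemma mon_ofFn {n : ℕ} (t : Fin n → ℕ) :
    mon (List.ofFn t) = ∑ j, Finsupp.single (t j) 1 := by
  rw [mon, List.map_ofFn, List.sum_ofFn]
  rfl

lemma wt_ofFn {n : ℕ} (t : Fin n → ℕ) :
    wt (List.ofFn t) = ∏ j, ((t j).factorial : ℚ)⁻¹ := by
  rw [wt, List.map_ofFn, List.prod_ofFn]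
  rfl

lemma luk_zero : Luk 0 = ∅ := by
  refine Finset.eq_empty_of_forall_notMem fun l hl => ?_
  obtain ⟨hluk, hmon⟩ := mem_Luk.1 hl
  have hlen : l.length = 0 := by
    have := deg_mon l
    rw [hmon] at this
    exact this.symm
  exact hluk.1 (List.length_eq_zero_iff.1 hlen)

lemma isLuk_zero_singleton : IsLuk [0] := by
  refine ⟨by simp, by simp, ?_⟩
  intro k hk
  simp only [List.length_singleton] at hk
  interval_cases k
  simp

lemma mon_zero_singleton : mon [0] = Finsupp.single 0 1 := by
  simp [mon]

lemma coeff_v (σ : ℕ →₀ ℕ) : vSeries σ = ∑ l ∈ Luk σ, wt l := by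
  have hvdef : vSeries σ = if 2 ≤ deg σ then
      ((deg σ : ℕ) : ℚ)⁻¹ *
        ∑ t ∈ Finset.Nat.antidiagonalTuple (deg σ) (deg σ - 1),
          (if (∑ j, Finsupp.single (t j) 1) = σ
            then ∏ j, ((t j).factorial : ℚ)⁻¹ else 0)
    else if σ = Finsupp.single 0 1 then 1 else 0 := rfl
  by_cases h2 : 2 ≤ deg σ
  · rw [hvdef, if_pos h2]
    set n := deg σ with hn
    have step1 : ∑ t ∈ Finset.Nat.antidiagonalTuple n (n - 1),
        (if (∑ j, Finsupp.single (t j) 1) = σ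
          then ∏ j, ((t j).factorial : ℚ)⁻¹ else 0)
        = ∑ l ∈ lists n (n - 1), (if mon l = σ then wt l else 0) := by
      rw [lists, Finset.sum_image (fun x _ y _ h => List.ofFn_injective h)]
      refine Finset.sum_congr rfl fun t _ => ?_
      rw [mon_ofFn, wt_ofFn]
    rw [step1]
    have hGrot : ∀ (l : List ℕ) (r : ℕ),
        (if mon (l.rotate r) = σ then wt (l.rotate r) else 0)
          = (if mon l = σ then wt l else 0) := by
      intro l r
      rw [mon_rotate, wt_rotate]
    rw [cycle_sum n (by omega) _ hGrot]
    rw [← mul_assoc, inv_mul_cancel₀ (by positivity : ((n : ℕ) : ℚ) ≠ 0), one_mul]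
    rw [Luk, ← hn, Finset.sum_filter, Finset.sum_filter]
    refine Finset.sum_congr rfl fun l _ => ?_
    split_ifs with hA hB hB <;> first | rfl | (exfalso; tauto)
  · rw [hvdef, if_neg h2]
    by_cases hσ : σ = Finsupp.single 0 1
    · rw [if_pos hσ]
      subst hσ
      have hLuk : Luk (Finsupp.single 0 1) = {[0]} := by
        ext l
        rw [mem_Luk, Finset.mem_singleton]
        constructor
        · rintro ⟨hluk, hmon⟩
          have hlen : l.length = 1 := by
            have := deg_mon l
            rw [hmon, deg_single] at this
            exact this.symm
          obtain ⟨a, rfl⟩ := List.length_eq_one_iff.1 hlen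
          have hsum := hluk.2.1
          simp only [List.sum_cons, List.sum_nil, List.length_singleton] at hsum
          have : a = 0 := by omega
          rw [this]
        · rintro rfl
          exact ⟨isLuk_zero_singleton, mon_zero_singleton⟩
      rw [hLuk, Finset.sum_singleton]
      simp [wt]
    · rw [if_neg hσ]
      have hLuk : Luk σ = ∅ := by
        refine Finset.eq_empty_of_forall_notMem fun l hl => ?_
        obtain ⟨hluk, hmon⟩ := mem_Luk.1 hl
        have hlen : l.length = deg σ := by
          have := deg_mon l
          rw [hmon] at this
          exact this.symm
        have hpos : 1 ≤ l.length := by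
          rcases l with - | ⟨a, t⟩
          · exact absurd rfl hluk.1
          · simp
        have hdeg1 : deg σ = 1 := by omega
        rw [hdeg1] at hlen
        obtain ⟨a, rfl⟩ := List.length_eq_one_iff.1 hlen
        have hsum := hluk.2.1
        simp only [List.sum_cons, List.sum_nil, List.length_singleton] at hsum
        have ha : a = 0 := by omega
        subst ha
        exact hσ (by rw [← hmon, mon_zero_singleton])
      rw [hLuk, Finset.sum_empty]

lemma coeff_v_pow (i : ℕ) : ∀ τ : ℕ →₀ ℕ,
    MvPowerSeries.coeff τ (vSeries ^ i) = ∑ r ∈ Cat i τ, wt r := by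
  induction i with
  | zero =>
    intro τ
    rw [pow_zero, MvPowerSeries.coeff_one, cat_zero]
    split_ifs <;> simp
  | succ i ih =>
    intro τ
    rw [pow_succ', MvPowerSeries.coeff_mul, cat_succ]
    refine Finset.sum_congr rfl fun p _ => ?_
    rw [MvPowerSeries.coeff_apply, coeff_v, ih]

lemma luk_sum_eq (σ : ℕ →₀ ℕ) :
    ∑ l ∈ Luk σ, wt l
      = ∑ i ∈ σ.support, ((i.factorial : ℚ)⁻¹) *
          ∑ g ∈ Cat i (σ - Finsupp.single i 1), wt g := by
  simp_rw [Finset.mul_sum]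
  rw [← Finset.sum_sigma σ.support (fun i => Cat i (σ - Finsupp.single i 1))
    (fun x => ((x.1.factorial : ℚ)⁻¹) * wt x.2)]
  refine Finset.sum_nbij' (fun l => (⟨l.headI, l.tail⟩ : Σ _i : ℕ, List ℕ))
    (fun x => x.1 :: x.2) ?_ ?_ ?_ ?_ ?_
  · intro l hl
    obtain ⟨hluk, hmon⟩ := mem_Luk.1 hl
    obtain ⟨a, t, rfl⟩ := List.exists_cons_of_ne_nil hluk.1
    simp only [List.headI_cons, List.tail_cons]
    have hmon' : Finsupp.single a 1 + mon t = σ := by rw [← mon_cons]; exact hmon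
    have hσa : 1 ≤ σ a := by
      have : σ a = 1 + mon t a := by
        rw [← hmon']
        simp [Finsupp.add_apply, Finsupp.single_apply]
      omega
    refine Finset.mem_sigma.2 ⟨?_, ?_⟩
    · show a ∈ σ.support
      exact Finsupp.mem_support_iff.2 (by omega)
    · show t ∈ Cat a (σ - Finsupp.single a 1)
      refine mem_Cat.2 ⟨?_, ?_, ?_⟩
      · have hs := hluk.2.1
        simp only [List.sum_cons, List.length_cons] at hs
        omega
      · intro k hk
        have hsf := luk_suff hluk
        have := hsf (k + 1) (by simp only [List.length_cons]; omega)
        rw [List.drop_succ_cons] at this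
        simp only [List.length_cons] at this
        omega
      · rw [← hmon', add_tsub_cancel_left]
  · rintro ⟨i, g⟩ hx
    obtain ⟨hi, hg⟩ := Finset.mem_sigma.1 hx
    have hi' : i ∈ σ.support := hi
    have hg' : g ∈ Cat i (σ - Finsupp.single i 1) := hg
    obtain ⟨hsum, hsf, hmon⟩ := mem_Cat.1 hg'
    show (i :: g) ∈ Luk σ
    have hσi : 1 ≤ σ i := by
      have := Finsupp.mem_support_iff.1 hi'
      omega
    have hle : Finsupp.single i 1 ≤ σ := Finsupp.single_le_iff.2 hσi
    have hmons : mon (i :: g) = σ := by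
      rw [mon_cons, hmon, add_tsub_cancel_of_le hle]
    refine mem_Luk.2 ⟨?_, hmons⟩
    refine suff_luk ?_ ?_
    · simp only [List.sum_cons, List.length_cons]
      omega
    · intro k hk
      simp only [List.length_cons] at hk
      rcases k with - | k
      · simp only [List.drop_zero, List.sum_cons, List.length_cons]
        omega
      · rw [List.drop_succ_cons]
        simp only [List.length_cons]
        have := hsf k (by omega)
        omega
  · intro l hl
    obtain ⟨hluk, -⟩ := mem_Luk.1 hl
    obtain ⟨a, t, rfl⟩ := List.exists_cons_of_ne_nil hluk.1
    rfl
  · rintro ⟨i, g⟩ -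
    rfl
  · intro l hl
    obtain ⟨hluk, -⟩ := mem_Luk.1 hl
    obtain ⟨a, t, rfl⟩ := List.exists_cons_of_ne_nil hluk.1
    simp only [List.headI_cons, List.tail_cons, wt_cons]

theorem v_fixed : vSeries = stringRHS vSeries := by
  funext σ
  show vSeries σ = ∑ i ∈ σ.support,
    ((i.factorial : ℚ)⁻¹) * MvPowerSeries.coeff (σ - Finsupp.single i 1) (vSeries ^ i)
  rw [coeff_v, luk_sum_eq]
  refine Finset.sum_congr rfl fun i _ => ?_
  rw [coeff_v_pow]

lemma deg_sub_single {σ : ℕ →₀ ℕ} {i : ℕ} (h : i ∈ σ.support) :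
    deg (σ - Finsupp.single i 1) + 1 = deg σ := by
  have hσi : 1 ≤ σ i := by
    have := Finsupp.mem_support_iff.1 h
    omega
  have hle : Finsupp.single i 1 ≤ σ := Finsupp.single_le_iff.2 hσi
  have h2 : deg (Finsupp.single i 1 + (σ - Finsupp.single i 1)) = deg σ := by
    rw [add_tsub_cancel_of_le hle]
  rw [deg_add, deg_single] at h2
  omega

lemma coeff_pow_congr (u w : MvPowerSeries ℕ ℚ) (n : ℕ)
    (h : ∀ σ, deg σ < n → u σ = w σ) (i : ℕ) :
    ∀ τ, deg τ < n → MvPowerSeries.coeff τ (u ^ i) = MvPowerSeries.coeff τ (w ^ i) := by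
  induction i with
  | zero => intro τ _; simp
  | succ i ih =>
    intro τ hτ
    rw [pow_succ', pow_succ', MvPowerSeries.coeff_mul, MvPowerSeries.coeff_mul]
    refine Finset.sum_congr rfl fun p hp => ?_
    rw [Finset.HasAntidiagonal.mem_antidiagonal] at hp
    have hdeg : deg p.1 + deg p.2 = deg τ := by rw [← deg_add, hp]
    rw [ih p.2 (by omega)]
    simp only [MvPowerSeries.coeff_apply]
    rw [h p.1 (by omega)]

end Stage4

end Stmt6Aux

open Stmt6Aux

/-- `v` satisfies the genus-zero string fixed-point equation `v = ∑_{i≥0} t_i v^i/i!`,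
and it is the unique solution of this equation with zero constant term. -/
theorem stmt6 :
    vSeries = stringRHS vSeries ∧
    ∀ w : MvPowerSeries ℕ ℚ, MvPowerSeries.constantCoeff w = 0 →
      w = stringRHS w → w = vSeries := by
  constructor
  · exact v_fixed
  · intro w h0 hw
    have key : ∀ n σ, deg σ = n → w σ = vSeries σ := by
      intro n
      induction n using Nat.strong_induction_on with
      | _ n IH =>
        intro σ hσ
        rcases Nat.eq_zero_or_pos n with rfl | hn
        · have hσ0 : σ = 0 := deg_eq_zero hσ
          subst hσ0
          have hw0 : w 0 = 0 := h0
          have hv0 : vSeries 0 = 0 := by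
            rw [coeff_v, luk_zero, Finset.sum_empty]
          rw [hw0, hv0]
        · have hlow : ∀ σ', deg σ' < n → w σ' = vSeries σ' :=
            fun σ' h => IH (deg σ') h σ' rfl
          have e1 : w σ = stringRHS w σ := congrFun hw σ
          have e2 : vSeries σ = stringRHS vSeries σ := congrFun v_fixed σ
          rw [e1, e2]
          show (∑ i ∈ σ.support,
              ((i.factorial : ℚ)⁻¹) * MvPowerSeries.coeff (σ - Finsupp.single i 1) (w ^ i))
            = ∑ i ∈ σ.support,
              ((i.factorial : ℚ)⁻¹) * MvPowerSeries.coeff (σ - Finsupp.single i 1) (vSeries ^ i)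
          refine Finset.sum_congr rfl fun i hi => ?_
          congr 1
          refine coeff_pow_congr w vSeries n hlow i _ ?_
          have := deg_sub_single hi
          omega
    funext σ
    exact key (deg σ) σ rfl
end

section
/- With Φ(z) = exp(∑_{k ≥ 1} ((2^{−2k} − 1)B_{2k}/(k(2k−1))) z^{1−2k}) as above, the identity Φ(z+2)/Φ(z) = ((z + 3/2)(z + 1/2)) / ((z+1)·√(z(z+2))) holds in ℚ[[z^{−1}]], i.e., φ(z+2) − φ(z) = log(1 + (3/2)z^{−1}) + log(1 + (1/2)z^{−1}) − log(1 + z^{−1}) − (1/2)log(1 + 2z^{−1}). -/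
open Finset PowerSeries

/- We work in `ℚ[[w]]` with `w = z⁻¹`. -/

/-- The coefficients `c_k = (2^{-2k} - 1)·B_{2k}/(k(2k-1))` of `φ(z) = ∑_{k≥1} c_k z^{1-2k}`. -/
noncomputable def cST (k : ℕ) : ℚ :=
  (((2 : ℚ) ^ (2*k))⁻¹ - 1) * bernoulli (2*k) / ((k : ℚ) * (2*(k : ℚ) - 1))

/-- `φ(z) = ∑_{k≥1} c_k w^{2k-1}` as an element of `ℚ[[w]]`, `w = z⁻¹`. -/
noncomputable def phiS : PowerSeries ℚ :=
  PowerSeries.mk fun n => if n % 2 = 1 then cST ((n+1)/2) else 0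

/-- `φ(z+a) = ∑_{k≥1} c_k w^{2k-1}(1+aw)^{-(2k-1)}`, the substitution `z ↦ z + a`
re-expanded in powers of `w = z⁻¹`; the `n`-th coefficient only receives contributions
from `k` with `2k-1 ≤ n`, so the sum below is exact. -/
noncomputable def phiShift (a : ℚ) : PowerSeries ℚ :=
  PowerSeries.mk fun n => ∑ k ∈ Icc 1 n,
    cST k * PowerSeries.coeff (R := ℚ) n
      (PowerSeries.X ^ (2*k-1) * ((1 + PowerSeries.C (R := ℚ) a * PowerSeries.X) ^ (2*k-1))⁻¹)

/-- The series `log(1 + a·z⁻¹) = ∑_{n≥1} (-1)^{n-1} a^n w^n / n ∈ ℚ[[w]]`. -/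
noncomputable def logS (a : ℚ) : PowerSeries ℚ :=
  PowerSeries.mk fun n => if n = 0 then 0 else (-1)^(n+1) * a^n / (n : ℚ)

lemma auxChoose (m : ℕ) : ∀ n : ℕ, ∑ i ∈ range (n+1), (m+i).choose i = (m+n+1).choose n := by
  intro n
  induction n with
  | zero => simp
  | succ n ih =>
    rw [Finset.sum_range_succ, ih]
    have : m + (n+1) + 1 = (m+n+1) + 1 := by ring
    rw [this, Nat.choose_succ_succ]
    congr 2 <;> omega

lemma geomOne (a : ℚ) : (1 + PowerSeries.C a * X) * PowerSeries.mk (fun j => (-a)^j) = 1 := by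
  ext n
  rw [add_mul, one_mul, map_add]
  cases n with
  | zero => simp
  | succ n =>
    rw [mul_assoc, coeff_C_mul, coeff_succ_X_mul, coeff_mk, coeff_mk]
    simp [pow_succ, mul_comm]

lemma geomPow (a : ℚ) (m : ℕ) :
    (PowerSeries.mk (fun j => (-a)^j)) ^ (m+1)
      = PowerSeries.mk (fun j => ((m+j).choose j : ℚ) * (-a)^j) := by
  induction m with
  | zero => ext n; simp
  | succ m ih =>
    rw [pow_succ, ih]
    ext n
    rw [coeff_mul, Finset.Nat.sum_antidiagonal_eq_sum_range_succ_mk, coeff_mk]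
    have : ∀ i ∈ range (n+1), coeff i (PowerSeries.mk fun j => ((m+j).choose j : ℚ) * (-a)^j)
        * coeff (n-i) (PowerSeries.mk fun j => (-a)^j)
        = ((m+i).choose i : ℚ) * (-a)^n := by
      intro i hi
      rw [coeff_mk, coeff_mk, mul_assoc, ← pow_add]
      congr 2
      simp only [mem_range] at hi
      omega
    rw [Finset.sum_congr rfl this, ← Finset.sum_mul]
    have : ∑ i ∈ range (n+1), ((m+i).choose i : ℚ) = ((m+n+1).choose n : ℚ) := by
      rw [← Nat.cast_sum, auxChoose m n]
    rw [this]
    congr 3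
    omega

lemma invPow (a : ℚ) (m : ℕ) :
    (((1 + PowerSeries.C a * X) ^ (m+1))⁻¹ : PowerSeries ℚ)
      = PowerSeries.mk (fun j => ((m+j).choose j : ℚ) * (-a)^j) := by
  symm
  rw [PowerSeries.eq_inv_iff_mul_eq_one]
  · rw [← geomPow, ← mul_pow, mul_comm, geomOne, one_pow]
  · simp

/-- the value of `g n i` summed below -/
noncomputable def gB (n i : ℕ) : ℚ :=
  bernoulli i * ((n+1).choose i) * 2^(n+1) * (((4:ℚ)⁻¹)^i - ((2:ℚ)⁻¹)^i)

lemma faulhaber_eval (n : ℕ) (hn : n ≠ 0) (x : ℕ) :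
    ∑ i ∈ range (n+1), (bernoulli i * ((n+1).choose i : ℚ) * (x:ℚ)^(n+1-i))
      = (n+1) * ∑ k ∈ range x, (k:ℚ)^n := by
  have h := sum_range_pow x n
  rw [← Finset.sum_div] at h
  have hn1 : ((n:ℚ)+1) ≠ 0 := by positivity
  rw [eq_div_iff hn1] at h
  push_cast at h ⊢
  linarith [h]

lemma sum_gB (n : ℕ) (hn : n ≠ 0) :
    ∑ i ∈ range (n+1), gB n i
      = ((2:ℚ)^(n+1))⁻¹ * ((n+1) * (1 + 2^n + 3^n)) - ((n:ℚ)+1) := by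
  have hg : ∀ i ∈ range (n+1), gB n i
      = ((2:ℚ)^(n+1))⁻¹ * (bernoulli i * ((n+1).choose i) * (4:ℚ)^(n+1-i))
        - bernoulli i * ((n+1).choose i) * (2:ℚ)^(n+1-i) := by
    intro i hi
    simp only [mem_range] at hi
    have e2 : ((2:ℚ))^(n+1) * ((2:ℚ)⁻¹)^i = 2^(n+1-i) := by
      rw [inv_pow, show (2:ℚ)^(n+1) = 2^(n+1-i) * 2^i from by rw [← pow_add]; congr 1; omega,
        mul_inv_cancel_right₀ (by positivity)]
    have e4 : ((2:ℚ))^(n+1) * ((4:ℚ)⁻¹)^i = ((2:ℚ)^(n+1))⁻¹ * 4^(n+1-i) := by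
      have h4 : (4:ℚ)^(n+1-i) = 4^(n+1) * (4^i)⁻¹ := by
        rw [show (4:ℚ)^(n+1) = 4^(n+1-i) * 4^i from by rw [← pow_add]; congr 1; omega,
          mul_inv_cancel_right₀ (by positivity)]
      rw [inv_pow, h4, show (4:ℚ)^(n+1) = 2^(n+1)*2^(n+1) from by
          rw [show (4:ℚ) = 2*2 by norm_num, mul_pow],
        ← mul_assoc, ← mul_assoc, inv_mul_cancel₀ (by positivity : ((2:ℚ)^(n+1)) ≠ 0), one_mul]
    unfold gB
    linear_combination (bernoulli i * ((n+1).choose i : ℚ)) * e4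
      - (bernoulli i * ((n+1).choose i : ℚ)) * e2
  have F4 := faulhaber_eval n hn 4
  have F2 := faulhaber_eval n hn 2
  norm_num at F4 F2
  rw [Finset.sum_congr rfl hg, Finset.sum_sub_distrib, ← Finset.mul_sum, F4, F2]
  have h2 : ∑ k ∈ range 2, (k:ℚ)^n = 1 := by
    rw [Finset.sum_range_succ, Finset.sum_range_one]
    simp [zero_pow hn]
  have h4 : ∑ k ∈ range 4, (k:ℚ)^n = 1 + 2^n + 3^n := by
    rw [Finset.sum_range_succ, Finset.sum_range_succ, Finset.sum_range_succ,
      Finset.sum_range_one]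
    simp [zero_pow hn]
  rw [h2, h4]
  push_cast
  ring

lemma sum_gB_split (n : ℕ) (hn : n ≠ 0) :
    ∑ i ∈ range (n+1), gB n i = gB n 1 + ∑ k ∈ Icc 1 (n/2), gB n (2*k) := by
  have hpt : ∀ i ∈ range (n+1), gB n i
      = (if i = 1 then gB n 1 else 0)
        + (if 2*(i/2) = i ∧ 1 ≤ i/2 then gB n (2*(i/2)) else 0) := by
    intro i _
    rcases Nat.even_or_odd i with he | ho
    · have hi2 : i % 2 = 0 := Nat.even_iff.mp he
      rcases eq_or_ne i 0 with rfl | hi0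
      · norm_num [gB]
      · have h2 : 2*(i/2) = i := by omega
        rw [if_neg (by omega), if_pos ⟨h2, by omega⟩, h2, zero_add]
    · have hi2 : i % 2 = 1 := Nat.odd_iff.mp ho
      rcases eq_or_ne i 1 with rfl | hi1
      · norm_num
      · have hb : bernoulli i = 0 := by
          rw [bernoulli_eq_bernoulli'_of_ne_one hi1]
          exact bernoulli'_eq_zero_of_odd ho (by omega)
        rw [if_neg hi1, if_neg (by omega)]
        simp [gB, hb]
  rw [Finset.sum_congr rfl hpt, Finset.sum_add_distrib]
  congr 1
  · rw [Finset.sum_ite_eq' (range (n+1)) 1 (fun _ => gB n 1),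
      if_pos (mem_range.mpr (by omega))]
  · rw [← Finset.sum_filter]
    refine Finset.sum_nbij' (fun i => i/2) (fun k => 2*k) ?_ ?_ ?_ ?_ ?_ <;>
        intro a ha <;> (try dsimp only) <;>
        simp only [mem_filter, mem_range, mem_Icc] at ha ⊢
    all_goals first
      | omega
      | exact ⟨ha.2.2, by omega⟩
      | rw [ha.2.1]

lemma hterm_lemma (n k : ℕ) (hn : n ≠ 0) (hk1 : 1 ≤ k) (hkn : k ≤ n) :
    cST k * PowerSeries.coeff (R := ℚ) n
        (PowerSeries.X ^ (2*k-1) * ((1 + PowerSeries.C (R := ℚ) 2 * PowerSeries.X) ^ (2*k-1))⁻¹)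
      = (if k = (n+1)/2 ∧ n % 2 = 1 then cST k else 0)
        + (if k ≤ n/2 then ((-1:ℚ))^(n+1) * 2 / ((n:ℚ)*((n:ℚ)+1)) * gB n (2*k) else 0) := by
  have hm : 2*k-1 = (2*(k-1)) + 1 := by omega
  rw [hm, invPow 2 (2*(k-1)), PowerSeries.coeff_X_pow_mul', coeff_mk]
  by_cases hbig : 2*(k-1)+1 ≤ n
  · rw [if_pos hbig]
    by_cases h2k : 2*k ≤ n
    · -- main case
      rw [if_neg (by omega), if_pos (by omega), zero_add]
      have he : (n - (2*(k-1)+1)) + 2*k = n+1 := by omega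
      have harg : 2*(k-1) + (n - (2*(k-1)+1)) = n - 1 := by omega
      rw [harg]
      set e := n - (2*(k-1)+1) with hedef
      have hsym : (n-1).choose e = (n-1).choose (2*k-2) := by
        rw [show e = (n-1)-(2*k-2) by omega]
        exact Nat.choose_symm (by omega)
      rw [hsym]
      have hU : ((2:ℚ)^(2*k)) ≠ 0 := by positivity
      have hsgn : ((-2:ℚ))^e * (2:ℚ)^(2*k) = (-1)^(n+1) * 2^(n+1) := by
        have h2 : ((-2:ℚ))^(2*k) = 2^(2*k) := by
          rw [pow_mul, pow_mul]; norm_num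
        rw [← h2, ← pow_add, he, neg_pow]
      have hsgn' : ((-2:ℚ))^e = (-1)^(n+1) * 2^(n+1) * ((2:ℚ)^(2*k))⁻¹ := by
        rw [← hsgn, mul_inv_cancel_right₀ hU]
      rw [hsgn']
      -- binomial relation
      have a1 : (n+1) * (n.choose (2*k-1)) = ((n+1).choose (2*k)) * (2*k) := by
        have h := Nat.add_one_mul_choose_eq n (2*k-1)
        rw [show 2*k-1+1 = 2*k by omega] at h
        exact h
      have a2 : n * ((n-1).choose (2*k-2)) = (n.choose (2*k-1)) * (2*k-1) := by
        have h := Nat.add_one_mul_choose_eq (n-1) (2*k-2)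
        rw [show n-1+1 = n by omega, show 2*k-2+1 = 2*k-1 by omega] at h
        exact h
      have b1 := congrArg (Nat.cast : ℕ → ℚ) a1
      have b2 := congrArg (Nat.cast : ℕ → ℚ) a2
      push_cast at b1
      rw [Nat.cast_mul, Nat.cast_mul, Nat.cast_sub (by omega : 1 ≤ 2*k)] at b2
      push_cast at b2
      have hcn1 : (((n-1).choose (2*k-2) : ℕ) : ℚ)
          = 2*(k:ℚ)*(2*(k:ℚ)-1)*(((n+1).choose (2*k) : ℕ) : ℚ)/((n:ℚ)*((n:ℚ)+1)) := by
        have hnq : (n:ℚ) ≠ 0 := by exact_mod_cast hn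
        have hn1q : ((n:ℚ)+1) ≠ 0 := by positivity
        field_simp
        linear_combination (2*(k:ℚ)-1) * b1 + ((n:ℚ)+1) * b2
      rw [hcn1]
      unfold cST gB
      have h44 : ((4:ℚ)⁻¹)^(2*k) = ((2:ℚ)^(2*k))⁻¹ * ((2:ℚ)^(2*k))⁻¹ := by
        rw [inv_pow, ← mul_inv, ← mul_pow]
        norm_num
      have h22 : ((2:ℚ)⁻¹)^(2*k) = ((2:ℚ)^(2*k))⁻¹ := by rw [inv_pow]
      rw [h44, h22]
      have hkq : (k:ℚ) ≠ 0 := by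
        exact_mod_cast (by omega : k ≠ 0)
      have h2k1 : (2*(k:ℚ)-1) ≠ 0 := by
        have : ((2*k-1 : ℕ) : ℚ) = 2*(k:ℚ)-1 := by
          rw [Nat.cast_sub (by omega : 1 ≤ 2*k)]; push_cast; ring
        rw [← this]
        exact_mod_cast (by omega : (2*k-1 : ℕ) ≠ 0)
      have hnq : (n:ℚ) ≠ 0 := by exact_mod_cast hn
      have hn1q : ((n:ℚ)+1) ≠ 0 := by positivity
      field_simp
      have hx : (-1 + (k:ℚ)*2)⁻¹ * (-1 + (k:ℚ)*2) = 1 :=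
        inv_mul_cancel₀ (by intro h; apply h2k1; linarith)
      linear_combination (bernoulli (2*k) * (((n+1).choose (2*k) : ℕ) : ℚ) * (1 - 2^(k*2))) * hx
    · -- boundary case 2k = n+1
      have h2keq : 2*k = n+1 := by omega
      rw [if_pos ⟨by omega, by omega⟩, if_neg (by omega), add_zero,
        show n - (2*(k-1)+1) = 0 by omega]
      simp
  · rw [if_neg hbig, mul_zero, if_neg (by omega), if_neg (by omega), add_zero]

/-- The two-step identity
`φ(z+2) - φ(z) = log(1 + (3/2)z⁻¹) + log(1 + (1/2)z⁻¹) - log(1 + z⁻¹) - (1/2)log(1 + 2z⁻¹)`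
in `ℚ[[z⁻¹]]`, i.e. `Φ(z+2)/Φ(z) = (z+3/2)(z+1/2)/((z+1)√(z(z+2)))` for `Φ = exp φ`. -/
theorem stmt9 :
    phiShift 2 - phiS
      = logS (3/2) + logS (1/2) - logS 1 - (2 : ℚ)⁻¹ • logS 2 := by
  ext n
  simp only [map_sub, map_add, map_smul, smul_eq_mul, phiShift, phiS, logS, coeff_mk]
  rcases eq_or_ne n 0 with rfl | hn
  · simp
  have hterm : ∀ k ∈ Icc 1 n, cST k * PowerSeries.coeff (R := ℚ) n
        (PowerSeries.X ^ (2*k-1) * ((1 + PowerSeries.C (R := ℚ) 2 * PowerSeries.X) ^ (2*k-1))⁻¹)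
      = (if k = (n+1)/2 ∧ n % 2 = 1 then cST k else 0)
        + (if k ≤ n/2 then ((-1:ℚ))^(n+1) * 2 / ((n:ℚ)*((n:ℚ)+1)) * gB n (2*k) else 0) := by
    intro k hk
    rw [mem_Icc] at hk
    exact hterm_lemma n k hn hk.1 hk.2
  rw [Finset.sum_congr rfl hterm, Finset.sum_add_distrib]
  have h1sum : (∑ k ∈ Icc 1 n, if k = (n+1)/2 ∧ n % 2 = 1 then cST k else 0)
      = (if n % 2 = 1 then cST ((n+1)/2) else 0) := by
    by_cases hpar : n % 2 = 1
    · rw [if_pos hpar, Finset.sum_eq_single_of_mem ((n+1)/2)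
        (mem_Icc.mpr ⟨by omega, by omega⟩)]
      · rw [if_pos ⟨rfl, hpar⟩]
      · intro k hk hne
        rw [if_neg (by tauto)]
    · rw [if_neg hpar]
      exact Finset.sum_eq_zero fun k hk => if_neg (by tauto)
  rw [h1sum]
  have h2sum : (∑ k ∈ Icc 1 n,
        if k ≤ n/2 then ((-1:ℚ))^(n+1) * 2 / ((n:ℚ)*((n:ℚ)+1)) * gB n (2*k) else 0)
      = ((-1:ℚ))^(n+1) * 2 / ((n:ℚ)*((n:ℚ)+1)) * ∑ k ∈ Icc 1 (n/2), gB n (2*k) := by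
    rw [← Finset.sum_filter, Finset.mul_sum]
    congr 1
    ext k
    simp only [mem_filter, mem_Icc]
    omega
  rw [h2sum]
  have hsum : ∑ k ∈ Icc 1 (n/2), gB n (2*k)
      = ((2:ℚ)^(n+1))⁻¹ * ((n+1) * (1 + 2^n + 3^n)) - ((n:ℚ)+1) - gB n 1 := by
    have := sum_gB_split n hn
    have := sum_gB n hn
    linarith
  rw [hsum]
  have hgB1 : gB n 1 = (-1/2) * ((n:ℚ)+1) * 2^(n+1) * (4⁻¹ - 2⁻¹) := by
    unfold gB
    push_cast
    simp
  rw [hgB1]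
  simp only [if_neg hn]
  have hq : (2:ℚ)^n ≠ 0 := by positivity
  have hnq : (n:ℚ) ≠ 0 := by exact_mod_cast hn
  have h32 : ((3:ℚ)/2)^n = 3^n / 2^n := div_pow 3 2 n
  have h12 : ((1:ℚ)/2)^n = 1 / 2^n := by rw [div_pow, one_pow]
  rw [h32, h12, one_pow, pow_succ]
  field_simp
  ring
end

section
/- Let F₀(x, T) := (1/2)·∑_{a,b ≥ 0} T̃_{2a+1}T̃_{2b+1}·Q^{2a+2b+2}/(a!·b!·(a+b+1)) − x·∑_{b ≥ 0} T̃_{2b+1}·Q^{2b+1}/(b!·(2b+1)) + (x²/4)·log Q, where T̃_{2a+1} = T_{2a+1} − δ_{a,0}, Q ∈ ℂ[[x+2]][[T]] satisfies Q = −x/2 + ∑_{a≥0} T_{2a+1}Q^{2a+1}/a! with Q(x,0) = −x/2, and log Q is expanded as log(−x/2) + log(Q/(−x/2)) with the second term a genuine power series with zero constant term. Then ∂²F₀/(∂T_{2a+1}∂T_{2b+1}) = Q^{2a+2b+2}/(a!·b!·(a+b+1)) for all a, b ≥ 0, and ∂²F₀/(∂x∂T_{2b+1}) = −Q^{2b+1}/(b!·(2b+1))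 for all b ≥ 0, and ∂²F₀/∂x² = (1/2)·log Q. -/
open Finset

/- We work in `ℂ[[x+2]][[T₁, T₃, T₅, …]]`, modelled as `MvPowerSeries ℕ A` with
`A := ℂ[[s]] = PowerSeries ℂ`, `s = x + 2` (so `x = s - 2`), the variable of index
`a : ℕ` being `T_{2a+1}`.  The element `log Q` is taken as an abstract element `LQ`
characterized (up to the additive constant `log(-x/2)`, which is immaterial for all
three conclusions) by `Q·∂LQ = ∂Q` for each of the derivations `∂/∂T_{2a+1}`, `∂/∂x`. -/

/-- `x = s - 2` in `A = ℂ[[s]]`. -/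
noncomputable def xA : PowerSeries ℂ := PowerSeries.X - 2

/-- The formal partial derivative `∂/∂T_{2i+1}`. -/
noncomputable def pdA (i : ℕ) (f : MvPowerSeries ℕ (PowerSeries ℂ)) :
    MvPowerSeries ℕ (PowerSeries ℂ) :=
  fun σ => ((σ i + 1 : ℕ) : PowerSeries ℂ) *
    MvPowerSeries.coeff (σ + Finsupp.single i 1) f

/-- The formal partial derivative `∂/∂x = ∂/∂s`, acting on coefficients. -/
noncomputable def dXA (f : MvPowerSeries ℕ (PowerSeries ℂ)) :
    MvPowerSeries ℕ (PowerSeries ℂ) :=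
  fun σ => PowerSeries.derivative ℂ (MvPowerSeries.coeff σ f)

/-- The series `∑_{a ≥ 0} T_{2a+1}·Q^{2a+1}/a!`, defined coefficientwise. -/
noncomputable def rhsA (Q : MvPowerSeries ℕ (PowerSeries ℂ)) :
    MvPowerSeries ℕ (PowerSeries ℂ) :=
  fun σ => ∑ a ∈ σ.support,
    PowerSeries.C ((a.factorial : ℂ)⁻¹) *
      MvPowerSeries.coeff (σ - Finsupp.single a 1) (Q ^ (2*a+1))

/-- `T̃_{2a+1} = T_{2a+1} - δ_{a,0}`. -/
noncomputable def Tt (a : ℕ) : MvPowerSeries ℕ (PowerSeries ℂ) :=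
  MvPowerSeries.X a - (if a = 0 then 1 else 0)

/-- `F₀ = (1/2)∑_{a,b≥0} T̃_{2a+1}T̃_{2b+1}Q^{2a+2b+2}/(a!b!(a+b+1))
  - x∑_{b≥0} T̃_{2b+1}Q^{2b+1}/(b!(2b+1)) + (x²/4)·log Q`, defined coefficientwise
(for a fixed monomial `σ` the terms with `a ∉ {0} ∪ supp σ` or `b ∉ {0} ∪ supp σ`
vanish, since then `T̃_{2a+1} = T_{2a+1}` contributes a variable absent from `σ`). -/
noncomputable def F0 (Q LQ : MvPowerSeries ℕ (PowerSeries ℂ)) :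
    MvPowerSeries ℕ (PowerSeries ℂ) :=
  fun σ =>
    PowerSeries.C (2⁻¹ : ℂ) *
      (∑ a ∈ insert 0 σ.support, ∑ b ∈ insert 0 σ.support,
        PowerSeries.C (((a.factorial : ℂ) * (b.factorial : ℂ) * ((a : ℂ)+(b : ℂ)+1))⁻¹) *
          MvPowerSeries.coeff σ (Tt a * Tt b * Q ^ (2*a+2*b+2)))
    - xA * (∑ b ∈ insert 0 σ.support,
        PowerSeries.C (((b.factorial : ℂ) * (2*(b : ℂ)+1))⁻¹) *
          MvPowerSeries.coeff σ (Tt b * Q ^ (2*b+1)))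
    + xA ^ 2 * PowerSeries.C (4⁻¹ : ℂ) * MvPowerSeries.coeff σ LQ

namespace BGW

abbrev AA : Type := PowerSeries ℂ
abbrev RR : Type := MvPowerSeries ℕ AA

noncomputable abbrev Cm : AA →+* RR := MvPowerSeries.C (σ := ℕ) (R := AA)
noncomputable abbrev CA : ℂ →+* AA := PowerSeries.C
noncomputable abbrev cf (σ : ℕ →₀ ℕ) : RR →ₗ[AA] AA := MvPowerSeries.coeff σ

lemma cf_apply (σ : ℕ →₀ ℕ) (f : RR) : cf σ f = f σ := rfl

lemma cf_pdA (i : ℕ) (f : RR) (σ : ℕ →₀ ℕ) :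
    cf σ (pdA i f) = ((σ i + 1 : ℕ) : AA) * cf (σ + Finsupp.single i 1) f := rfl

lemma cf_dXA (f : RR) (σ : ℕ →₀ ℕ) :
    cf σ (dXA f) = PowerSeries.derivative ℂ (cf σ f) := rfl

lemma pdA_add (i : ℕ) (f g : RR) : pdA i (f + g) = pdA i f + pdA i g := by
  funext σ
  show ((σ i + 1 : ℕ) : AA) * cf (σ + Finsupp.single i 1) (f + g)
      = cf σ (pdA i f) + cf σ (pdA i g)
  rw [cf_pdA, cf_pdA, map_add, mul_add]

lemma pdA_neg (i : ℕ) (f : RR) : pdA i (-f) = -pdA i f := by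
  funext σ
  show ((σ i + 1 : ℕ) : AA) * cf (σ + Finsupp.single i 1) (-f) = -cf σ (pdA i f)
  rw [cf_pdA, map_neg, mul_neg]

lemma pdA_sub (i : ℕ) (f g : RR) : pdA i (f - g) = pdA i f - pdA i g := by
  rw [sub_eq_add_neg, pdA_add, pdA_neg, sub_eq_add_neg]

lemma single_add_ne (σ : ℕ →₀ ℕ) (i : ℕ) : σ + Finsupp.single i 1 ≠ 0 := by
  intro h
  have h2 := congrArg (fun t : ℕ →₀ ℕ => t i) h
  simp [Finsupp.single_eq_same] at h2

lemma pdA_C (i : ℕ) (c : AA) : pdA i (Cm c) = 0 := by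
  funext σ
  show ((σ i + 1 : ℕ) : AA) * cf (σ + Finsupp.single i 1) (Cm c) = 0
  rw [show cf (σ + Finsupp.single i 1) (Cm c)
      = MvPowerSeries.coeff (σ + Finsupp.single i 1) (MvPowerSeries.C (σ := ℕ) (R := AA) c) from rfl,
    MvPowerSeries.coeff_C, if_neg (single_add_ne σ i), mul_zero]

lemma sum_antidiag_swap (n : ℕ →₀ ℕ) (f : ((ℕ→₀ℕ) × (ℕ→₀ℕ)) → AA) :
    ∑ p ∈ antidiagonal n, f p = ∑ p ∈ antidiagonal n, f p.swap := by
  conv_lhs => rw [← Finset.HasAntidiagonal.map_swap_antidiagonal]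
  rw [Finset.sum_map]
  simp

private lemma key_half (i : ℕ) (F G : (ℕ→₀ℕ) → AA) (σ : ℕ →₀ ℕ) :
    ∑ p ∈ antidiagonal (σ + Finsupp.single i 1), (((p.1 : ℕ→₀ℕ) i : ℕ) : AA) * (F p.1 * G p.2)
      = ∑ p ∈ antidiagonal σ, (((p.1 : ℕ→₀ℕ) i + 1 : ℕ) : AA) * (F (p.1 + Finsupp.single i 1) * G p.2) := by
  classical
  set e := Finsupp.single i 1 with he
  have step1 : ∑ p ∈ antidiagonal (σ + e), ((p.1 i : ℕ) : AA) * (F p.1 * G p.2)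
      = ∑ p ∈ (antidiagonal (σ + e)).filter (fun p => p.1 i ≠ 0),
          ((p.1 i : ℕ) : AA) * (F p.1 * G p.2) := by
    refine (Finset.sum_subset (Finset.filter_subset _ _) ?_).symm
    intro p hp hnp
    have h0 : p.1 i = 0 := by
      by_contra h
      exact hnp (Finset.mem_filter.mpr ⟨hp, h⟩)
    rw [h0]
    simp
  rw [step1]
  refine Finset.sum_bij' (fun p _ => (p.1 - e, p.2)) (fun q _ => (q.1 + e, q.2)) ?_ ?_ ?_ ?_ ?_
  · rintro ⟨p1, p2⟩ hp
    simp only [Finset.mem_filter, Finset.HasAntidiagonal.mem_antidiagonal] at hp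
    obtain ⟨hsum, hne⟩ := hp
    have hle : e ≤ p1 := by rw [he, Finsupp.single_le_iff]; omega
    rw [Finset.HasAntidiagonal.mem_antidiagonal]
    have h2 : (p1 - e + p2) + e = σ + e := by
      rw [add_right_comm, tsub_add_cancel_of_le hle, hsum]
    exact add_right_cancel h2
  · rintro ⟨q1, q2⟩ hq
    rw [Finset.HasAntidiagonal.mem_antidiagonal] at hq
    simp only [Finset.mem_filter, Finset.HasAntidiagonal.mem_antidiagonal]
    constructor
    · rw [← hq]; abel
    · simp [he, Finsupp.single_eq_same]
  · rintro ⟨p1, p2⟩ hp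
    simp only [Finset.mem_filter, Finset.HasAntidiagonal.mem_antidiagonal] at hp
    have hle : e ≤ p1 := by rw [he, Finsupp.single_le_iff]; omega
    simp [tsub_add_cancel_of_le hle]
  · rintro ⟨q1, q2⟩ _
    simp
  · rintro ⟨p1, p2⟩ hp
    simp only [Finset.mem_filter, Finset.HasAntidiagonal.mem_antidiagonal] at hp
    obtain ⟨hsum, hne⟩ := hp
    have hle : e ≤ p1 := by rw [he, Finsupp.single_le_iff]; omega
    have h1 : (p1 - e) i + 1 = p1 i := by
      rw [Finsupp.tsub_apply, he, Finsupp.single_eq_same]; omega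
    show ((p1 i : ℕ) : AA) * (F p1 * G p2)
        = (((p1 - e) i + 1 : ℕ) : AA) * (F (p1 - e + e) * G p2)
    rw [h1, tsub_add_cancel_of_le hle]

lemma pdA_mul (i : ℕ) (f g : RR) : pdA i (f * g) = pdA i f * g + f * pdA i g := by
  classical
  funext σ
  show ((σ i + 1 : ℕ) : AA) * cf (σ + Finsupp.single i 1) (f * g)
      = cf σ (pdA i f * g) + cf σ (f * pdA i g)
  set e := Finsupp.single i 1 with he
  rw [MvPowerSeries.coeff_mul, MvPowerSeries.coeff_mul, MvPowerSeries.coeff_mul]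
  have lhs : ((σ i + 1 : ℕ) : AA) * ∑ p ∈ antidiagonal (σ + e),
        (MvPowerSeries.coeff p.1) f * (MvPowerSeries.coeff p.2) g
      = (∑ p ∈ antidiagonal (σ + e), ((p.1 i : ℕ) : AA) * (cf p.1 f * cf p.2 g))
        + ∑ p ∈ antidiagonal (σ + e), ((p.2 i : ℕ) : AA) * (cf p.1 f * cf p.2 g) := by
    rw [Finset.mul_sum, ← Finset.sum_add_distrib]
    refine Finset.sum_congr rfl fun p hp => ?_
    rw [Finset.HasAntidiagonal.mem_antidiagonal] at hp
    have h3 : p.1 i + p.2 i = σ i + 1 := by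
      have h4 := congrArg (fun t : ℕ →₀ ℕ => t i) hp
      simpa [he, Finsupp.single_eq_same] using h4
    rw [show (MvPowerSeries.coeff p.1) f = cf p.1 f from rfl,
      show (MvPowerSeries.coeff p.2) g = cf p.2 g from rfl, ← h3]
    push_cast
    ring
  rw [lhs]
  congr 1
  · rw [key_half i (fun τ => cf τ f) (fun τ => cf τ g) σ]
    refine Finset.sum_congr rfl fun p _ => ?_
    rw [show (MvPowerSeries.coeff p.1) (pdA i f) = cf p.1 (pdA i f) from rfl, cf_pdA]
    push_cast
    ring
  · have h5 : ∑ p ∈ antidiagonal (σ + e), ((p.2 i : ℕ) : AA) * (cf p.1 f * cf p.2 g)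
        = ∑ p ∈ antidiagonal (σ + e),
            (((p.1 : ℕ→₀ℕ) i : ℕ) : AA) * ((fun τ => cf τ g) p.1 * (fun τ => cf τ f) p.2) := by
      rw [sum_antidiag_swap (σ + e) (fun p => ((p.2 i : ℕ) : AA) * (cf p.1 f * cf p.2 g))]
      refine Finset.sum_congr rfl fun p _ => ?_
      simp only [Prod.fst_swap, Prod.snd_swap]
      ring
    rw [h5, key_half i (fun τ => cf τ g) (fun τ => cf τ f) σ,
      sum_antidiag_swap σ (fun p => (MvPowerSeries.coeff p.1) f *
        (MvPowerSeries.coeff p.2) (pdA i g))]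
    refine Finset.sum_congr rfl fun p _ => ?_
    simp only [Prod.fst_swap, Prod.snd_swap]
    rw [show (MvPowerSeries.coeff p.1) (pdA i g) = cf p.1 (pdA i g) from rfl, cf_pdA]
    push_cast
    ring

lemma natCast_AA (n : ℕ) : ((n : ℕ) : AA) = CA (n : ℂ) := by
  rw [map_natCast]

lemma natCast_RR (n : ℕ) : ((n : ℕ) : RR) = Cm (CA (n : ℂ)) := by
  rw [map_natCast, map_natCast]

lemma coeff_one' (σ : ℕ →₀ ℕ) : cf σ (1 : RR) = if σ = 0 then 1 else 0 := by
  rw [show (1 : RR) = Cm 1 from (map_one Cm).symm]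
  show MvPowerSeries.coeff σ (MvPowerSeries.C (σ := ℕ) (R := AA) 1) = _
  rw [MvPowerSeries.coeff_C]

lemma pdA_X (i j : ℕ) : pdA i (MvPowerSeries.X j) = if i = j then 1 else 0 := by
  classical
  funext σ
  show ((σ i + 1 : ℕ) : AA) * cf (σ + Finsupp.single i 1) (MvPowerSeries.X j) = _
  rw [show cf (σ + Finsupp.single i 1) (MvPowerSeries.X j)
    = MvPowerSeries.coeff (σ + Finsupp.single i 1) (MvPowerSeries.X j) from rfl]
  rw [MvPowerSeries.coeff_X]
  by_cases hij : i = j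
  · subst hij
    rw [if_pos rfl]
    by_cases hσ : σ = 0
    · subst hσ
      rw [if_pos (by simp)]
      show _ = cf 0 (1 : RR)
      rw [coeff_one', if_pos rfl]
      simp
    · rw [if_neg, mul_zero, show ((1 : RR)) σ = cf σ 1 from rfl, coeff_one', if_neg hσ]
      intro h
      apply hσ
      have : σ + Finsupp.single i 1 = 0 + Finsupp.single i 1 := by
        rw [zero_add]; exact h
      exact add_right_cancel this
  · rw [if_neg hij, if_neg, mul_zero]
    · rfl
    · intro h
      have h2 := congrArg (fun t : ℕ →₀ ℕ => t i) h
      simp [Finsupp.single_eq_same, Finsupp.single_apply, Ne.symm hij] at h2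

lemma pdA_one (i : ℕ) : pdA i (1 : RR) = 0 := by
  rw [show (1 : RR) = Cm 1 from (map_one Cm).symm, pdA_C]

lemma pdA_Tt (i j : ℕ) : pdA i (Tt j) = if i = j then 1 else 0 := by
  unfold Tt
  rw [pdA_sub, pdA_X]
  by_cases h : j = 0
  · rw [if_pos h, pdA_one, sub_zero]
  · rw [if_neg h, show (0 : RR) = Cm 0 from (map_zero Cm).symm, pdA_C, sub_zero]

lemma pdA_pow (i : ℕ) (f : RR) (n : ℕ) :
    pdA i (f ^ (n + 1)) = ((n : RR) + 1) * (f ^ n * pdA i f) := by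
  induction n with
  | zero => simp [pdA]
  | succ n ih =>
    rw [pow_succ, pdA_mul, ih, pow_succ]
    push_cast
    ring

lemma dXA_add (f g : RR) : dXA (f + g) = dXA f + dXA g := by
  funext σ
  show PowerSeries.derivative ℂ (cf σ (f + g)) = cf σ (dXA f) + cf σ (dXA g)
  rw [map_add, map_add, cf_dXA, cf_dXA]

lemma dXA_neg (f : RR) : dXA (-f) = -dXA f := by
  funext σ
  show PowerSeries.derivative ℂ (cf σ (-f)) = -cf σ (dXA f)
  rw [map_neg, map_neg, cf_dXA]

lemma dXA_sub (f g : RR) : dXA (f - g) = dXA f - dXA g := by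
  rw [sub_eq_add_neg, dXA_add, dXA_neg, sub_eq_add_neg]

lemma dXA_mul (f g : RR) : dXA (f * g) = dXA f * g + f * dXA g := by
  funext σ
  show PowerSeries.derivative ℂ (cf σ (f * g)) = cf σ (dXA f * g) + cf σ (f * dXA g)
  rw [show cf σ (f*g) = MvPowerSeries.coeff σ (f*g) from rfl, MvPowerSeries.coeff_mul,
    MvPowerSeries.coeff_mul, MvPowerSeries.coeff_mul, map_sum, ← Finset.sum_add_distrib]
  refine Finset.sum_congr rfl fun p _ => ?_
  rw [Derivation.leibniz]
  rw [show (MvPowerSeries.coeff p.1) (dXA f) = PowerSeries.derivative ℂ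
    ((MvPowerSeries.coeff p.1) f) from rfl,
    show (MvPowerSeries.coeff p.2) (dXA g) = PowerSeries.derivative ℂ
    ((MvPowerSeries.coeff p.2) g) from rfl]
  rw [smul_eq_mul, smul_eq_mul]
  ring

lemma dXA_C (c : AA) : dXA (Cm c) = Cm (PowerSeries.derivative ℂ c) := by
  classical
  funext σ
  show PowerSeries.derivative ℂ (cf σ (Cm c)) = cf σ (Cm (PowerSeries.derivative ℂ c))
  rw [show cf σ (Cm c) = MvPowerSeries.coeff σ (MvPowerSeries.C (σ := ℕ) (R := AA) c) from rfl,
    show cf σ (Cm _) = MvPowerSeries.coeff σ (MvPowerSeries.C (σ := ℕ) (R := AA)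
      (PowerSeries.derivative ℂ c)) from rfl,
    MvPowerSeries.coeff_C, MvPowerSeries.coeff_C]
  split_ifs
  · rfl
  · rw [map_zero]

lemma dXA_CA (r : ℂ) : dXA (Cm (CA r)) = 0 := by
  rw [dXA_C, PowerSeries.derivative_C, map_zero]

lemma dXA_one : dXA (1 : RR) = 0 := by
  rw [show (1 : RR) = Cm (CA 1) from by rw [map_one, map_one], dXA_CA]

lemma dXA_X (j : ℕ) : dXA (MvPowerSeries.X j : RR) = 0 := by
  classical
  funext σ
  show PowerSeries.derivative ℂ (cf σ (MvPowerSeries.X j)) = 0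
  rw [show cf σ (MvPowerSeries.X j) = MvPowerSeries.coeff σ (MvPowerSeries.X j) from rfl,
    MvPowerSeries.coeff_X]
  split_ifs
  · rw [show (1 : AA) = CA 1 from (map_one CA).symm, PowerSeries.derivative_C]
  · rw [map_zero]

lemma dXA_Tt (j : ℕ) : dXA (Tt j) = 0 := by
  unfold Tt
  rw [dXA_sub, dXA_X]
  split_ifs
  · rw [dXA_one, sub_zero]
  · rw [show (0:RR) = Cm (CA 0) from by rw [map_zero, map_zero], dXA_CA, sub_zero]

lemma dXA_pow (f : RR) (n : ℕ) :
    dXA (f ^ (n + 1)) = ((n : RR) + 1) * (f ^ n * dXA f) := by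
  induction n with
  | zero => simp [pow_one, pow_zero, dXA_mul]
  | succ n ih =>
    rw [pow_succ, dXA_mul, ih, pow_succ]
    push_cast
    ring

lemma dXA_CxA : dXA (Cm xA) = 1 := by
  rw [dXA_C]
  unfold xA
  rw [map_sub, PowerSeries.derivative_X,
    show (2 : AA) = CA 2 from (map_ofNat CA 2).symm, PowerSeries.derivative_C, sub_zero, map_one]

noncomputable def LSum {ι : Type} (f : ι → RR) : RR := fun σ => ∑ᶠ i, cf σ (f i)

def LF {ι : Type} (f : ι → RR) : Prop :=
  ∀ σ : ℕ →₀ ℕ, (Function.support fun i => cf σ (f i)).Finite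

lemma cf_LSum {ι : Type} (f : ι → RR) (σ : ℕ →₀ ℕ) :
    cf σ (LSum f) = ∑ᶠ i, cf σ (f i) := rfl

lemma cf_LSum_eq_sum {ι : Type} (f : ι → RR) (σ : ℕ →₀ ℕ) (s : Finset ι)
    (hs : ∀ i, cf σ (f i) ≠ 0 → i ∈ s) : cf σ (LSum f) = ∑ i ∈ s, cf σ (f i) :=
  finsum_eq_sum_of_support_subset _ (fun i hi => Finset.mem_coe.mpr (hs i hi))

lemma LSum_congr {ι : Type} {f g : ι → RR} (h : ∀ i, f i = g i) : LSum f = LSum g :=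
  congrArg LSum (funext h)

lemma LF_of_subset {ι : Type} {f : ι → RR} (S : (ℕ→₀ℕ) → Finset ι)
    (h : ∀ σ i, cf σ (f i) ≠ 0 → i ∈ S σ) : LF f :=
  fun σ => Set.Finite.subset (S σ).finite_toSet
    (fun i hi => Finset.mem_coe.mpr (h σ i (Function.mem_support.mp hi)))

lemma LF_congr {ι : Type} {f g : ι → RR} (h : ∀ i, f i = g i) (hf : LF f) : LF g := by
  have : f = g := funext h
  rwa [← this]

lemma LF_add {ι : Type} {f g : ι → RR} (hf : LF f) (hg : LF g) :
    LF (fun i => f i + g i) := by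
  intro σ
  apply Set.Finite.subset ((hf σ).union (hg σ))
  intro i hi
  simp only [Function.mem_support, map_add] at hi
  by_contra hc
  simp only [Set.mem_union, Function.mem_support, not_or, not_not] at hc
  rw [hc.1, hc.2, add_zero] at hi
  exact hi rfl

lemma LF_neg {ι : Type} {f : ι → RR} (hf : LF f) : LF (fun i => -f i) := by
  intro σ
  apply Set.Finite.subset (hf σ)
  intro i hi
  simp only [Function.mem_support, map_neg, neg_ne_zero] at hi
  exact Function.mem_support.mpr hi

lemma LF_sub {ι : Type} {f g : ι → RR} (hf : LF f) (hg : LF g) :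
    LF (fun i => f i - g i) := by
  exact LF_congr (fun i => (sub_eq_add_neg (f i) (g i)).symm) (LF_add hf (LF_neg hg))

lemma LF_mul_left {ι : Type} (g : RR) {f : ι → RR} (hf : LF f) :
    LF (fun i => g * f i) := by
  classical
  intro σ
  apply Set.Finite.subset (Set.Finite.biUnion (Finset.HasAntidiagonal.antidiagonal σ).finite_toSet
    (fun p _ => hf p.2))
  intro i hi
  simp only [Function.mem_support] at hi
  by_contra hmem
  apply hi
  rw [show cf σ (g * f i) = MvPowerSeries.coeff σ (g * f i) from rfl,
    MvPowerSeries.coeff_mul]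
  refine Finset.sum_eq_zero fun p hp => ?_
  have h0 : cf p.2 (f i) = 0 := by
    by_contra hne
    exact hmem (Set.mem_biUnion (Finset.mem_coe.mpr hp) (Function.mem_support.mpr hne))
  rw [show (MvPowerSeries.coeff p.2) (f i) = cf p.2 (f i) from rfl, h0, mul_zero]

lemma LF_pdA {ι : Type} (j : ℕ) {f : ι → RR} (hf : LF f) :
    LF (fun i => pdA j (f i)) := by
  intro σ
  apply Set.Finite.subset (hf (σ + Finsupp.single j 1))
  intro i hi
  simp only [Function.mem_support] at hi ⊢
  intro h0
  apply hi
  rw [cf_pdA, h0, mul_zero]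

lemma LF_dXA {ι : Type} {f : ι → RR} (hf : LF f) :
    LF (fun i => dXA (f i)) := by
  intro σ
  apply Set.Finite.subset (hf σ)
  intro i hi
  simp only [Function.mem_support] at hi ⊢
  intro h0
  apply hi
  rw [cf_dXA, h0, map_zero]

lemma LSum_add {ι : Type} {f g : ι → RR} (hf : LF f) (hg : LF g) :
    LSum (fun i => f i + g i) = LSum f + LSum g := by
  funext σ
  show ∑ᶠ i, cf σ (f i + g i) = cf σ (LSum f) + cf σ (LSum g)
  rw [cf_LSum, cf_LSum]
  simp only [map_add]
  exact finsum_add_distrib (hf σ) (hg σ)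

lemma LSum_neg {ι : Type} (f : ι → RR) : LSum (fun i => -f i) = -LSum f := by
  funext σ
  show ∑ᶠ i, cf σ (-f i) = -cf σ (LSum f)
  rw [cf_LSum]
  simp only [map_neg]
  exact finsum_neg_distrib _

lemma LSum_sub {ι : Type} {f g : ι → RR} (hf : LF f) (hg : LF g) :
    LSum (fun i => f i - g i) = LSum f - LSum g := by
  have h1 : LSum (fun i => f i + -g i) = LSum f + LSum (fun i => -g i) :=
    LSum_add hf (LF_neg hg)
  rw [show (fun i => f i - g i) = (fun i => f i + -g i) from funext fun i => sub_eq_add_neg _ _,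
    h1, LSum_neg, sub_eq_add_neg]

lemma mul_LSum {ι : Type} (g : RR) {f : ι → RR} (hf : LF f) :
    g * LSum f = LSum (fun i => g * f i) := by
  classical
  funext σ
  show MvPowerSeries.coeff σ (g * LSum f) = ∑ᶠ i, cf σ (g * f i)
  rw [MvPowerSeries.coeff_mul]
  set s : Finset ι := (Finset.HasAntidiagonal.antidiagonal σ).biUnion (fun p => (hf p.2).toFinset) with hs
  have h1 : ∀ p ∈ Finset.HasAntidiagonal.antidiagonal σ,
      (MvPowerSeries.coeff p.1) g * (MvPowerSeries.coeff p.2) (LSum f)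
        = ∑ i ∈ s, cf p.1 g * cf p.2 (f i) := by
    intro p hp
    rw [show (MvPowerSeries.coeff p.2) (LSum f) = cf p.2 (LSum f) from rfl,
      cf_LSum_eq_sum (f := f) (σ := p.2) (s := s)
        (fun i hi => Finset.mem_biUnion.mpr ⟨p, hp, (hf p.2).mem_toFinset.mpr hi⟩),
      Finset.mul_sum]
  rw [Finset.sum_congr rfl h1, Finset.sum_comm]
  have h2 : ∀ i, ∑ p ∈ Finset.HasAntidiagonal.antidiagonal σ, cf p.1 g * cf p.2 (f i) = cf σ (g * f i) := by
    intro i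
    rw [show cf σ (g * f i) = MvPowerSeries.coeff σ (g * f i) from rfl,
      MvPowerSeries.coeff_mul]
  rw [Finset.sum_congr rfl (fun i _ => h2 i)]
  refine (finsum_eq_sum_of_support_subset _ ?_).symm
  intro i hi
  simp only [Function.mem_support] at hi
  have : MvPowerSeries.coeff σ (g * f i) ≠ 0 := hi
  rw [MvPowerSeries.coeff_mul] at this
  obtain ⟨p, hp, hne⟩ := Finset.exists_ne_zero_of_sum_ne_zero this
  have : cf p.2 (f i) ≠ 0 := fun h0 => hne (by
    rw [show (MvPowerSeries.coeff p.2) (f i) = cf p.2 (f i) from rfl, h0, mul_zero])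
  exact Finset.mem_coe.mpr (Finset.mem_biUnion.mpr ⟨p, hp, (hf p.2).mem_toFinset.mpr this⟩)

lemma pdA_LSum {ι : Type} (j : ℕ) {f : ι → RR} (hf : LF f) :
    pdA j (LSum f) = LSum (fun i => pdA j (f i)) := by
  funext σ
  show ((σ j + 1 : ℕ) : AA) * cf (σ + Finsupp.single j 1) (LSum f) = ∑ᶠ i, cf σ (pdA j (f i))
  set t := (hf (σ + Finsupp.single j 1)).toFinset with ht
  rw [cf_LSum_eq_sum (f := f) (σ := σ + Finsupp.single j 1) (s := t)
      (fun i hi => (hf _).mem_toFinset.mpr hi),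
    Finset.mul_sum]
  have hsupp : Function.support (fun i => cf σ (pdA j (f i))) ⊆ ↑t := by
    intro i hi
    rw [Function.mem_support, cf_pdA] at hi
    have h2 : cf (σ + Finsupp.single j 1) (f i) ≠ 0 := fun h0 => hi (by rw [h0, mul_zero])
    exact Finset.mem_coe.mpr ((hf _).mem_toFinset.mpr h2)
  rw [finsum_eq_sum_of_support_subset _ hsupp]
  exact Finset.sum_congr rfl fun i _ => (cf_pdA j (f i) σ).symm

lemma dXA_LSum {ι : Type} {f : ι → RR} (hf : LF f) :
    dXA (LSum f) = LSum (fun i => dXA (f i)) := by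
  funext σ
  show PowerSeries.derivative ℂ (cf σ (LSum f)) = ∑ᶠ i, cf σ (dXA (f i))
  set t := (hf σ).toFinset with ht
  rw [cf_LSum_eq_sum (f := f) (σ := σ) (s := t) (fun i hi => (hf _).mem_toFinset.mpr hi),
    map_sum]
  have hsupp : Function.support (fun i => cf σ (dXA (f i))) ⊆ ↑t := by
    intro i hi
    rw [Function.mem_support, cf_dXA] at hi
    have h2 : cf σ (f i) ≠ 0 := fun h0 => hi (by rw [h0, map_zero])
    exact Finset.mem_coe.mpr ((hf _).mem_toFinset.mpr h2)
  rw [finsum_eq_sum_of_support_subset _ hsupp]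
  exact Finset.sum_congr rfl fun i _ => (cf_dXA (f i) σ).symm

lemma LSum_mul_LSum {ι κ : Type} {f : ι → RR} {g : κ → RR} (hf : LF f) (hg : LF g) :
    LSum f * LSum g = LSum (fun p : ι × κ => f p.1 * g p.2) := by
  classical
  funext σ
  show MvPowerSeries.coeff σ (LSum f * LSum g) = ∑ᶠ p : ι × κ, cf σ (f p.1 * g p.2)
  rw [MvPowerSeries.coeff_mul]
  set s : Finset ι := (Finset.HasAntidiagonal.antidiagonal σ).biUnion (fun p => (hf p.1).toFinset) with hs
  set t : Finset κ := (Finset.HasAntidiagonal.antidiagonal σ).biUnion (fun p => (hg p.2).toFinset) with htt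
  have h1 : ∀ p ∈ Finset.HasAntidiagonal.antidiagonal σ,
      (MvPowerSeries.coeff p.1) (LSum f) * (MvPowerSeries.coeff p.2) (LSum g)
        = ∑ q ∈ s ×ˢ t, cf p.1 (f q.1) * cf p.2 (g q.2) := by
    intro p hp
    rw [show (MvPowerSeries.coeff p.1) (LSum f) = cf p.1 (LSum f) from rfl,
      show (MvPowerSeries.coeff p.2) (LSum g) = cf p.2 (LSum g) from rfl,
      cf_LSum_eq_sum (f := f) (σ := p.1) (s := s)
        (fun i hi => Finset.mem_biUnion.mpr ⟨p, hp, (hf p.1).mem_toFinset.mpr hi⟩),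
      cf_LSum_eq_sum (f := g) (σ := p.2) (s := t)
        (fun k hk => Finset.mem_biUnion.mpr ⟨p, hp, (hg p.2).mem_toFinset.mpr hk⟩),
      Finset.sum_mul_sum, ← Finset.sum_product']
  rw [Finset.sum_congr rfl h1, Finset.sum_comm]
  have h2 : ∀ q : ι × κ, ∑ p ∈ Finset.HasAntidiagonal.antidiagonal σ, cf p.1 (f q.1) * cf p.2 (g q.2)
      = cf σ (f q.1 * g q.2) := by
    intro q
    rw [show cf σ (f q.1 * g q.2) = MvPowerSeries.coeff σ (f q.1 * g q.2) from rfl,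
      MvPowerSeries.coeff_mul]
  rw [Finset.sum_congr rfl (fun q _ => h2 q)]
  refine (finsum_eq_sum_of_support_subset _ ?_).symm
  intro q hq
  simp only [Function.mem_support] at hq
  have h3 : MvPowerSeries.coeff σ (f q.1 * g q.2) ≠ 0 := hq
  rw [MvPowerSeries.coeff_mul] at h3
  obtain ⟨p, hp, hne⟩ := Finset.exists_ne_zero_of_sum_ne_zero h3
  have hgf : cf p.1 (f q.1) ≠ 0 := fun h0 => hne (by
    rw [show (MvPowerSeries.coeff p.1) (f q.1) = cf p.1 (f q.1) from rfl, h0, zero_mul])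
  have hgg : cf p.2 (g q.2) ≠ 0 := fun h0 => hne (by
    rw [show (MvPowerSeries.coeff p.2) (g q.2) = cf p.2 (g q.2) from rfl, h0, mul_zero])
  refine Finset.mem_coe.mpr (Finset.mem_product.mpr ⟨?_, ?_⟩)
  · exact Finset.mem_biUnion.mpr ⟨p, hp, (hf p.1).mem_toFinset.mpr hgf⟩
  · exact Finset.mem_biUnion.mpr ⟨p, hp, (hg p.2).mem_toFinset.mpr hgg⟩

lemma LSum_delta {ι : Type} [DecidableEq ι] (b : ι) (g : RR) :
    LSum (fun i => if i = b then g else 0) = g := by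
  funext σ
  show ∑ᶠ i, cf σ (if i = b then g else 0) = g σ
  rw [finsum_eq_single _ b (fun x hx => by rw [if_neg hx, map_zero]), if_pos rfl]
  rfl

lemma LSum_delta_fst {κ : Type} (b : ℕ) {h : κ → RR} (hh : LF h) :
    LSum (fun p : ℕ × κ => if p.1 = b then h p.2 else 0) = LSum h := by
  classical
  funext σ
  show ∑ᶠ p : ℕ × κ, cf σ (if p.1 = b then h p.2 else 0) = cf σ (LSum h)
  set t := (hh σ).toFinset with htt
  have h1 : ∑ᶠ p : ℕ × κ, cf σ (if p.1 = b then h p.2 else 0)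
      = ∑ p ∈ {b} ×ˢ t, cf σ (if p.1 = b then h p.2 else 0) := by
    apply finsum_eq_sum_of_support_subset
    intro p hp
    simp only [Function.mem_support] at hp
    by_cases hpb : p.1 = b
    · rw [if_pos hpb] at hp
      refine Finset.mem_coe.mpr (Finset.mem_product.mpr ⟨Finset.mem_singleton.mpr hpb,
        (hh σ).mem_toFinset.mpr hp⟩)
    · rw [if_neg hpb, map_zero] at hp
      exact absurd rfl hp
  rw [h1, Finset.sum_product, Finset.sum_singleton]
  rw [cf_LSum_eq_sum (f := h) (σ := σ) (s := t) (fun k hk => (hh σ).mem_toFinset.mpr hk)]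
  exact Finset.sum_congr rfl fun k _ => by rw [if_pos rfl]

lemma LSum_delta_snd {κ : Type} (b : ℕ) {h : κ → RR} (hh : LF h) :
    LSum (fun p : κ × ℕ => if p.2 = b then h p.1 else 0) = LSum h := by
  classical
  funext σ
  show ∑ᶠ p : κ × ℕ, cf σ (if p.2 = b then h p.1 else 0) = cf σ (LSum h)
  set t := (hh σ).toFinset with htt
  have h1 : ∑ᶠ p : κ × ℕ, cf σ (if p.2 = b then h p.1 else 0)
      = ∑ p ∈ t ×ˢ {b}, cf σ (if p.2 = b then h p.1 else 0) := by
    apply finsum_eq_sum_of_support_subset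
    intro p hp
    simp only [Function.mem_support] at hp
    by_cases hpb : p.2 = b
    · rw [if_pos hpb] at hp
      refine Finset.mem_coe.mpr (Finset.mem_product.mpr ⟨(hh σ).mem_toFinset.mpr hp,
        Finset.mem_singleton.mpr hpb⟩)
    · rw [if_neg hpb, map_zero] at hp
      exact absurd rfl hp
  rw [h1, Finset.sum_product, cf_LSum_eq_sum (f := h) (σ := σ) (s := t)
    (fun k hk => (hh σ).mem_toFinset.mpr hk)]
  refine Finset.sum_congr rfl fun k _ => ?_
  rw [Finset.sum_singleton, if_pos rfl]

lemma cf_C_mul (c : AA) (f : RR) (σ : ℕ →₀ ℕ) : cf σ (Cm c * f) = c * cf σ f :=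
  MvPowerSeries.coeff_C_mul σ f c

lemma Tt_of_ne (a : ℕ) (ha : a ≠ 0) : Tt a = MvPowerSeries.X a := by
  unfold Tt
  rw [if_neg ha, sub_zero]

lemma cf_X_mul (a : ℕ) (g : RR) (σ : ℕ →₀ ℕ) :
    cf σ (MvPowerSeries.X a * g) =
      if Finsupp.single a 1 ≤ σ then cf (σ - Finsupp.single a 1) g else 0 := by
  classical
  rw [show (MvPowerSeries.X a : RR) = MvPowerSeries.monomial (Finsupp.single a 1) 1 from rfl,
    show cf σ (MvPowerSeries.monomial (Finsupp.single a 1) 1 * g)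
      = MvPowerSeries.coeff σ (MvPowerSeries.monomial (Finsupp.single a 1) 1 * g) from rfl,
    MvPowerSeries.coeff_monomial_mul]
  split_ifs
  · rw [one_mul]
  · rfl

lemma cf_Tt_mul (a : ℕ) (g : RR) (σ : ℕ →₀ ℕ) (h : cf σ (Tt a * g) ≠ 0) :
    a ∈ insert 0 σ.support := by
  classical
  by_cases ha : a = 0
  · rw [ha]; exact Finset.mem_insert_self 0 _
  · rw [Tt_of_ne a ha, cf_X_mul] at h
    refine Finset.mem_insert_of_mem (Finsupp.mem_support_iff.mpr ?_)
    intro h0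
    apply h
    have hnle : ¬ Finsupp.single a 1 ≤ σ := by
      rw [Finsupp.single_le_iff, h0]
      omega
    rw [if_neg hnle]

lemma LF_shape {c : ℕ → AA} {g : ℕ → RR} : LF (fun a => Cm (c a) * (Tt a * g a)) := by
  refine LF_of_subset (fun σ => insert 0 σ.support) fun σ a h => ?_
  rw [cf_C_mul] at h
  exact cf_Tt_mul a (g a) σ (right_ne_zero_of_mul h)

lemma LF_shape2 {c : ℕ × ℕ → AA} {g : ℕ × ℕ → RR} :
    LF (fun p : ℕ × ℕ => Cm (c p) * (Tt p.1 * (Tt p.2 * g p))) := by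
  refine LF_of_subset (fun σ => (insert 0 σ.support) ×ˢ (insert 0 σ.support)) fun σ p h => ?_
  rw [cf_C_mul] at h
  have h1 := right_ne_zero_of_mul h
  refine Finset.mem_product.mpr ⟨cf_Tt_mul p.1 _ σ h1, ?_⟩
  have h2 : cf σ (Tt p.2 * (Tt p.1 * g p)) ≠ 0 := by
    rwa [show Tt p.2 * (Tt p.1 * g p) = Tt p.1 * (Tt p.2 * g p) by ring]
  exact cf_Tt_mul p.2 _ σ h2

lemma LF_delta {ι : Type} [DecidableEq ι] (b : ι) (g : RR) :
    LF (fun i => if i = b then g else 0) := by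
  refine LF_of_subset (fun _ => {b}) fun σ i h => ?_
  by_cases hib : i = b
  · exact Finset.mem_singleton.mpr hib
  · rw [if_neg hib, map_zero] at h
    exact absurd rfl h

lemma LF_delta_fst {κ : Type} (b : ℕ) {h : κ → RR} (hh : LF h) :
    LF (fun p : ℕ × κ => if p.1 = b then h p.2 else 0) := by
  intro σ
  refine Set.Finite.subset (Set.Finite.prod (Set.finite_singleton b) (hh σ)) ?_
  intro p hp
  rw [Function.mem_support] at hp
  have hp' : cf σ (if p.1 = b then h p.2 else 0) ≠ 0 := hp
  by_cases hpb : p.1 = b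
  · rw [if_pos hpb] at hp'
    exact Set.mem_prod.mpr ⟨hpb, Function.mem_support.mpr hp'⟩
  · rw [if_neg hpb, map_zero] at hp'
    exact absurd rfl hp'

lemma LF_delta_snd {κ : Type} (b : ℕ) {h : κ → RR} (hh : LF h) :
    LF (fun p : κ × ℕ => if p.2 = b then h p.1 else 0) := by
  intro σ
  refine Set.Finite.subset (Set.Finite.prod (hh σ) (Set.finite_singleton b)) ?_
  intro p hp
  rw [Function.mem_support] at hp
  have hp' : cf σ (if p.2 = b then h p.1 else 0) ≠ 0 := hp
  by_cases hpb : p.2 = b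
  · rw [if_pos hpb] at hp'
    exact Set.mem_prod.mpr ⟨Function.mem_support.mpr hp', hpb⟩
  · rw [if_neg hpb, map_zero] at hp'
    exact absurd rfl hp'

/-- The canonical summand family of `rhsA`. -/
noncomputable def Kx (Q : RR) : ℕ → RR :=
  fun a => Cm (CA ((a.factorial : ℂ)⁻¹)) * (MvPowerSeries.X a * Q ^ (2*a+1))

/-- `T̃`-version of `Kx`: `Kf a = T̃_{2a+1} Q^{2a+1}/a!`. -/
noncomputable def Kf (Q : RR) : ℕ → RR :=
  fun a => Cm (CA ((a.factorial : ℂ)⁻¹)) * (Tt a * Q ^ (2*a+1))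

lemma LF_Kf (Q : RR) : LF (Kf Q) := LF_shape

lemma rhsA_eq (Q : RR) : rhsA Q = LSum (Kx Q) := by
  classical
  funext σ
  show rhsA Q σ = cf σ (LSum (Kx Q))
  rw [cf_LSum_eq_sum (Kx Q) σ σ.support ?side]
  case side =>
    intro a ha
    unfold Kx at ha
    rw [cf_C_mul, cf_X_mul] at ha
    by_contra hmem
    apply ha
    rw [if_neg, mul_zero]
    rw [Finsupp.single_le_iff]
    simpa using Finsupp.notMem_support_iff.mp hmem
  unfold rhsA
  refine Finset.sum_congr rfl fun a ha => ?_
  unfold Kx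
  have hle : Finsupp.single a 1 ≤ σ := by
    rw [Finsupp.single_le_iff]
    have := Finsupp.mem_support_iff.mp ha
    omega
  rw [cf_C_mul, cf_X_mul, if_pos hle]

lemma Kx_eq_Kf_add (Q : RR) (a : ℕ) :
    Kx Q a = Kf Q a + (if a = 0 then Q else 0) := by
  unfold Kx Kf
  by_cases ha : a = 0
  · subst ha
    rw [if_pos rfl]
    unfold Tt
    rw [if_pos rfl]
    simp [Nat.factorial_zero, mul_add, mul_one, pow_one, sub_mul, one_mul]
  · rw [if_neg ha, Tt_of_ne a ha, add_zero]

/-- The key identity `∑ T̃_{2a+1} Q^{2a+1}/a! = x/2`. -/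
lemma LSum_Kf (Q : RR)
    (hQ : Q = MvPowerSeries.C (σ := ℕ) (R := PowerSeries ℂ) (PowerSeries.C (-(2⁻¹ : ℂ)) * xA) + rhsA Q) :
    LSum (Kf Q) = Cm (CA (2⁻¹ : ℂ) * xA) := by
  have h1 : LSum (Kx Q) = LSum (Kf Q) + Q := by
    rw [LSum_congr (Kx_eq_Kf_add Q), LSum_add (LF_Kf Q) (LF_delta 0 Q), LSum_delta]
  have h2 := hQ
  rw [rhsA_eq, h1] at h2
  have h3 : (0 : RR) = Cm (CA (-(2⁻¹ : ℂ)) * xA) + LSum (Kf Q) := by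
    have := congrArg (fun z => z - Q) h2
    simpa [sub_self, add_sub_cancel_right, add_assoc, add_comm, add_left_comm] using this
  have h4 : LSum (Kf Q) = - Cm (CA (-(2⁻¹ : ℂ)) * xA) := by
    rw [eq_neg_iff_add_eq_zero]
    rw [eq_comm] at h3
    rw [add_comm] at h3
    exact h3
  rw [h4, ← map_neg Cm]
  congr 1
  rw [map_neg CA]
  ring

/-- Summand family of the double sum in `F₀`. -/
noncomputable def Gf (Q : RR) : ℕ × ℕ → RR := fun p =>
  Cm (CA (((p.1.factorial : ℂ) * (p.2.factorial : ℂ) * ((p.1:ℂ)+(p.2:ℂ)+1))⁻¹)) *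
    (Tt p.1 * Tt p.2 * Q ^ (2*p.1+2*p.2+2))

/-- Summand family of the single sum in `F₀`. -/
noncomputable def Hf (Q : RR) : ℕ → RR := fun b =>
  Cm (CA (((b.factorial : ℂ) * (2*(b:ℂ)+1))⁻¹)) * (Tt b * Q ^ (2*b+1))

/-- `W`-family: `T̃_{2c+1} Q^{2c}/c!`. -/
noncomputable def Wf (Q : RR) : ℕ → RR := fun c =>
  Cm (CA ((c.factorial : ℂ)⁻¹)) * (Tt c * Q ^ (2*c))

lemma LF_Gf (Q : RR) : LF (Gf Q) :=
  LF_congr (fun p => by unfold Gf; rw [mul_assoc (Tt p.1)]) LF_shape2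

lemma LF_Hf (Q : RR) : LF (Hf Q) := LF_shape

lemma LF_Wf (Q : RR) : LF (Wf Q) := LF_shape

lemma mem_of_TtTt {a b : ℕ} {σ : ℕ →₀ ℕ} {g : RR} (h : cf σ (Tt a * Tt b * g) ≠ 0) :
    a ∈ insert 0 σ.support ∧ b ∈ insert 0 σ.support := by
  constructor
  · refine cf_Tt_mul a (Tt b * g) σ ?_
    rwa [← mul_assoc]
  · refine cf_Tt_mul b (Tt a * g) σ ?_
    rwa [show Tt b * (Tt a * g) = Tt a * Tt b * g by ring]

lemma F0_eq (Q LQ : RR) :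
    F0 Q LQ = Cm (CA (2⁻¹ : ℂ)) * LSum (Gf Q) - Cm xA * LSum (Hf Q)
      + Cm (xA ^ 2 * CA (4⁻¹ : ℂ)) * LQ := by
  classical
  funext σ
  show F0 Q LQ σ = cf σ (Cm (CA (2⁻¹:ℂ)) * LSum (Gf Q)) - cf σ (Cm xA * LSum (Hf Q))
      + cf σ (Cm (xA ^ 2 * CA (4⁻¹:ℂ)) * LQ)
  rw [cf_C_mul, cf_C_mul, cf_C_mul]
  have hG : cf σ (LSum (Gf Q)) = ∑ a ∈ insert 0 σ.support, ∑ b ∈ insert 0 σ.support,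
      PowerSeries.C (((a.factorial : ℂ) * (b.factorial : ℂ) * ((a : ℂ)+(b : ℂ)+1))⁻¹) *
        MvPowerSeries.coeff σ (Tt a * Tt b * Q ^ (2*a+2*b+2)) := by
    rw [cf_LSum_eq_sum (Gf Q) σ ((insert 0 σ.support) ×ˢ (insert 0 σ.support)) ?mem,
      Finset.sum_product]
    case mem =>
      intro p hp
      unfold Gf at hp
      rw [cf_C_mul] at hp
      exact Finset.mem_product.mpr (mem_of_TtTt (right_ne_zero_of_mul hp))
    refine Finset.sum_congr rfl fun a _ => Finset.sum_congr rfl fun b _ => ?_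
    unfold Gf
    rw [cf_C_mul]
  have hH : cf σ (LSum (Hf Q)) = ∑ b ∈ insert 0 σ.support,
      PowerSeries.C (((b.factorial : ℂ) * (2*(b : ℂ)+1))⁻¹) *
        MvPowerSeries.coeff σ (Tt b * Q ^ (2*b+1)) := by
    rw [cf_LSum_eq_sum (Hf Q) σ (insert 0 σ.support) ?mem2]
    case mem2 =>
      intro b hb
      unfold Hf at hb
      rw [cf_C_mul] at hb
      exact cf_Tt_mul b _ σ (right_ne_zero_of_mul hb)
    refine Finset.sum_congr rfl fun b _ => ?_
    unfold Hf
    rw [cf_C_mul]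
  rw [hG, hH]
  unfold F0
  rw [mul_assoc]

lemma pdA_C_mul (i : ℕ) (c : AA) (f : RR) : pdA i (Cm c * f) = Cm c * pdA i f := by
  rw [pdA_mul, pdA_C, zero_mul, zero_add]

lemma derivative_xA : PowerSeries.derivative ℂ xA = 1 := by
  unfold xA
  rw [map_sub, PowerSeries.derivative_X,
    show (2 : AA) = CA 2 from (map_ofNat CA 2).symm, PowerSeries.derivative_C, sub_zero]

lemma dXA_CA_mul (r : ℂ) (f : RR) : dXA (Cm (CA r) * f) = Cm (CA r) * dXA f := by
  rw [dXA_mul, dXA_CA, zero_mul, zero_add]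

lemma CmCA_mul (r s : ℂ) : Cm (CA r) * Cm (CA s) = Cm (CA (r * s)) := by
  rw [← map_mul, ← map_mul]

lemma constCast (k : ℕ) : ((k : RR) + 1) = Cm (CA ((k : ℂ) + 1)) := by
  rw [map_add, map_add, map_one, map_one, natCast_RR]

lemma cast_add_one_ne_zero (a c : ℕ) : ((a:ℂ) + (c:ℂ) + 1) ≠ 0 := by
  have : ((a:ℂ) + (c:ℂ) + 1) = ((a + c + 1 : ℕ) : ℂ) := by push_cast; ring
  rw [this]
  exact Nat.cast_ne_zero.mpr (by omega)

lemma const1 (a c : ℕ) :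
    (((a.factorial:ℂ) * (c.factorial:ℂ) * ((a:ℂ)+(c:ℂ)+1))⁻¹) * (2*(a:ℂ)+2*(c:ℂ)+2)
      = 2 * ((a.factorial:ℂ)⁻¹ * (c.factorial:ℂ)⁻¹) := by
  have h1 : (a.factorial:ℂ) ≠ 0 := Nat.cast_ne_zero.mpr a.factorial_ne_zero
  have h2 : (c.factorial:ℂ) ≠ 0 := Nat.cast_ne_zero.mpr c.factorial_ne_zero
  have h3 := cast_add_one_ne_zero a c
  field_simp

lemma const2 (c : ℕ) :
    (((c.factorial:ℂ) * (2*(c:ℂ)+1))⁻¹) * (2*(c:ℂ)+1) = (c.factorial:ℂ)⁻¹ := by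
  have h1 : (c.factorial:ℂ) ≠ 0 := Nat.cast_ne_zero.mpr c.factorial_ne_zero
  have h3 : (2*(c:ℂ)+1) ≠ 0 := by
    have : (2*(c:ℂ) + 1) = ((2*c + 1 : ℕ) : ℂ) := by push_cast; ring
    rw [this]
    exact Nat.cast_ne_zero.mpr (by omega)
  field_simp

lemma QW (Q : RR) : Q * LSum (Wf Q) = LSum (Kf Q) := by
  rw [mul_LSum Q (LF_Wf Q)]
  refine LSum_congr fun c => ?_
  unfold Wf Kf
  rw [pow_succ]
  ring

lemma Z_lemma (Q : RR) (hV : LSum (Kf Q) = Cm (CA (2⁻¹ : ℂ) * xA)) (E : RR) :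
    LSum (fun c => Wf Q c * (Q * E)) = Cm (CA (2⁻¹ : ℂ) * xA) * E := by
  have h1 : ∀ c, Wf Q c * (Q * E) = E * Kf Q c := by
    intro c
    unfold Wf Kf
    rw [pow_succ]
    ring
  rw [LSum_congr h1, ← mul_LSum E (LF_Kf Q), hV]
  ring

/-- First-derivative summand family: `T̃_{2c+1} Q^{2b+2c+2}/(b!c!(b+c+1))`. -/
noncomputable def M1 (Q : RR) (b : ℕ) : ℕ → RR := fun c =>
  Cm (CA (((b.factorial:ℂ) * (c.factorial:ℂ) * ((b:ℂ)+(c:ℂ)+1))⁻¹)) *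
    (Tt c * Q ^ (2*b+2*c+2))

noncomputable def M2 (Q : RR) (b : ℕ) : ℕ → RR := fun a =>
  Cm (CA (((a.factorial:ℂ) * (b.factorial:ℂ) * ((a:ℂ)+(b:ℂ)+1))⁻¹)) *
    (Tt a * Q ^ (2*a+2*b+2))

noncomputable def G3f (Q : RR) (b : ℕ) : ℕ × ℕ → RR := fun p =>
  Cm (CA (2 * ((p.1.factorial:ℂ)⁻¹ * (p.2.factorial:ℂ)⁻¹))) *
    (Tt p.1 * (Tt p.2 * (Q ^ (2*p.1+2*p.2+1) * pdA b Q)))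

lemma LF_M1 (Q : RR) (b : ℕ) : LF (M1 Q b) := LF_shape
lemma LF_M2 (Q : RR) (b : ℕ) : LF (M2 Q b) := LF_shape
lemma LF_G3f (Q : RR) (b : ℕ) : LF (G3f Q b) := LF_shape2

lemma M2_eq_M1 (Q : RR) (b a : ℕ) : M2 Q b a = M1 Q b a := by
  unfold M1 M2
  rw [show 2*a+2*b+2 = 2*b+2*a+2 by omega]
  congr 3
  ring

lemma Gsplit (Q : RR) (b : ℕ) (p : ℕ × ℕ) :
    pdA b (Gf Q p) = (if p.1 = b then M1 Q b p.2 else 0)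
      + (if p.2 = b then M2 Q b p.1 else 0) + G3f Q b p := by
  obtain ⟨a, c⟩ := p
  unfold Gf G3f M1 M2
  simp only
  rw [pdA_C_mul, pdA_mul, pdA_mul,
    show 2*a+2*c+2 = (2*a+2*c+1)+1 by omega, pdA_pow, constCast]
  have hc : Cm (CA (((a.factorial:ℂ) * (c.factorial:ℂ) * ((a:ℂ)+(c:ℂ)+1))⁻¹))
        * Cm (CA (((2*a+2*c+1 : ℕ):ℂ) + 1))
      = Cm (CA (2 * ((a.factorial:ℂ)⁻¹ * (c.factorial:ℂ)⁻¹))) := by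
    rw [CmCA_mul]
    congr 2
    rw [show (((2*a+2*c+1 : ℕ):ℂ) + 1) = 2*(a:ℂ)+2*(c:ℂ)+2 by push_cast; ring]
    exact const1 a c
  by_cases h1 : a = b
  · subst h1
    by_cases h2 : c = a
    · subst h2
      simp only [pdA_Tt, eq_self_iff_true, if_true]
      linear_combination (Tt c * Tt c * (Q ^ (2*c+2*c+1) * pdA c Q)) * hc
    · simp only [pdA_Tt, eq_self_iff_true, if_true]
      rw [if_neg (fun h : a = c => h2 h.symm), if_neg h2]
      linear_combination (Tt a * Tt c * (Q ^ (2*a+2*c+1) * pdA a Q)) * hc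
  · by_cases h2 : c = b
    · subst h2
      simp only [pdA_Tt, eq_self_iff_true, if_true]
      rw [if_neg (fun h : c = a => h1 h.symm), if_neg h1]
      linear_combination (Tt a * Tt c * (Q ^ (2*a+2*c+1) * pdA c Q)) * hc
    · rw [pdA_Tt, pdA_Tt, if_neg (fun h : b = a => h1 h.symm),
        if_neg (fun h : b = c => h2 h.symm), if_neg h1, if_neg h2]
      linear_combination (Tt a * Tt c * (Q ^ (2*a+2*c+1) * pdA b Q)) * hc

lemma Hsplit (Q : RR) (b : ℕ) (c : ℕ) :
    pdA b (Hf Q c) = (if c = b then Cm (CA (((b.factorial:ℂ) * (2*(b:ℂ)+1))⁻¹)) * Q ^ (2*b+1)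
      else 0) + Wf Q c * pdA b Q := by
  unfold Hf Wf
  rw [pdA_C_mul, pdA_mul, pdA_pow, constCast]
  have hc : Cm (CA (((c.factorial:ℂ) * (2*(c:ℂ)+1))⁻¹)) * Cm (CA (((2*c : ℕ):ℂ) + 1))
      = Cm (CA ((c.factorial:ℂ)⁻¹)) := by
    rw [CmCA_mul]
    congr 2
    rw [show (((2*c : ℕ):ℂ) + 1) = 2*(c:ℂ)+1 by push_cast; ring]
    exact const2 c
  by_cases h2 : c = b
  · subst h2
    simp only [pdA_Tt, eq_self_iff_true, if_true]
    linear_combination (Tt c * Q ^ (2*c) * pdA c Q) * hc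
  · rw [pdA_Tt, if_neg (fun h : b = c => h2 h.symm), if_neg h2]
    linear_combination (Tt c * Q ^ (2*c) * pdA b Q) * hc

lemma LF_WfD (Q D : RR) : LF (fun c => Wf Q c * D) :=
  LF_congr (fun c => by unfold Wf; ring) (LF_shape (c := fun c => CA ((c.factorial:ℂ)⁻¹))
    (g := fun c => Q ^ (2*c) * D))

lemma G3f_Kf (Q : RR) (b : ℕ) (p : ℕ × ℕ) :
    Cm (CA (2⁻¹:ℂ)) * G3f Q b p = Kf Q p.1 * ((fun c => Wf Q c * pdA b Q) p.2) := by
  unfold G3f Kf Wf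
  simp only
  rw [← mul_assoc, CmCA_mul,
    show ((2⁻¹:ℂ) * (2 * ((p.1.factorial:ℂ)⁻¹ * (p.2.factorial:ℂ)⁻¹)))
      = (p.1.factorial:ℂ)⁻¹ * (p.2.factorial:ℂ)⁻¹ by ring,
    show 2*p.1+2*p.2+1 = (2*p.1+1)+2*p.2 by omega, pow_add, ← CmCA_mul]
  ring

/-- The first `T`-derivative of `F₀`. -/
lemma pdA_F0 (Q LQ : RR)
    (hQ : Q = MvPowerSeries.C (σ := ℕ) (R := PowerSeries ℂ) (PowerSeries.C (-(2⁻¹ : ℂ)) * xA) + rhsA Q)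
    (hLQb : ∀ a : ℕ, Q * pdA a LQ = pdA a Q) (b : ℕ) :
    pdA b (F0 Q LQ) = LSum (M1 Q b)
      - Cm (xA * CA (((b.factorial:ℂ) * (2*(b:ℂ)+1))⁻¹)) * Q ^ (2*b+1) := by
  have hV : LSum (Kf Q) = Cm (CA (2⁻¹ : ℂ) * xA) := LSum_Kf Q hQ
  set E := pdA b LQ with hE
  set Nb := Cm (CA (((b.factorial:ℂ) * (2*(b:ℂ)+1))⁻¹)) * Q ^ (2*b+1) with hNb
  -- step 1: differentiate the three pieces
  rw [F0_eq, pdA_add, pdA_sub, pdA_C_mul, pdA_C_mul,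
    show pdA b (Cm (xA ^ 2 * CA (4⁻¹:ℂ)) * LQ) = Cm (xA ^ 2 * CA (4⁻¹:ℂ)) * E from
      pdA_C_mul b _ LQ,
    pdA_LSum b (LF_Gf Q), pdA_LSum b (LF_Hf Q)]
  -- step 2: split the G-sum
  rw [LSum_congr (Gsplit Q b)]
  have hsplitG : LSum (fun p : ℕ × ℕ => (if p.1 = b then M1 Q b p.2 else 0)
        + (if p.2 = b then M2 Q b p.1 else 0) + G3f Q b p)
      = LSum (M1 Q b) + LSum (M1 Q b) + LSum (G3f Q b) := by
    rw [show (fun p : ℕ × ℕ => (if p.1 = b then M1 Q b p.2 else 0)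
        + (if p.2 = b then M2 Q b p.1 else 0) + G3f Q b p)
      = (fun p : ℕ × ℕ => ((if p.1 = b then M1 Q b p.2 else 0)
        + (if p.2 = b then M2 Q b p.1 else 0)) + G3f Q b p) from rfl,
      LSum_add (LF_add (LF_delta_fst b (LF_M1 Q b)) (LF_delta_snd b (LF_M2 Q b)))
        (LF_G3f Q b),
      LSum_add (LF_delta_fst b (LF_M1 Q b)) (LF_delta_snd b (LF_M2 Q b)),
      LSum_delta_fst b (LF_M1 Q b), LSum_delta_snd b (LF_M2 Q b),
      LSum_congr (M2_eq_M1 Q b)]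
  rw [hsplitG]
  -- step 3: split the H-sum
  rw [LSum_congr (Hsplit Q b),
    LSum_add (LF_delta b Nb) (LF_WfD Q (pdA b Q)), LSum_delta]
  -- step 4: the G3 term
  have hG3 : Cm (CA (2⁻¹:ℂ)) * LSum (G3f Q b)
      = Cm (CA (2⁻¹ : ℂ) * xA) * LSum (fun c => Wf Q c * pdA b Q) := by
    rw [mul_LSum _ (LF_G3f Q b), LSum_congr (G3f_Kf Q b),
      ← LSum_mul_LSum (LF_Kf Q) (LF_WfD Q (pdA b Q)), hV]
  -- step 5: Z in terms of E
  have hZ : LSum (fun c => Wf Q c * pdA b Q) = Cm (CA (2⁻¹ : ℂ) * xA) * E := by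
    rw [LSum_congr (g := fun c => Wf Q c * (Q * E)) (fun c => by rw [hLQb b]),
      Z_lemma Q hV E]
  -- step 6: final ring identity
  rw [mul_add, mul_add, hG3, hZ]
  have f1 : Cm (CA (2⁻¹:ℂ)) * (LSum (M1 Q b) + LSum (M1 Q b)) = LSum (M1 Q b) := by
    rw [← two_mul, ← mul_assoc, show (2 : RR) = Cm (CA (2:ℂ)) from by
      rw [map_ofNat, map_ofNat], CmCA_mul]
    norm_num
  have e1 : Cm (CA (2⁻¹ : ℂ) * xA) * Cm (CA (2⁻¹ : ℂ) * xA)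
      = Cm (xA ^ 2 * CA (4⁻¹:ℂ)) := by
    rw [← map_mul]
    congr 1
    rw [show CA (2⁻¹:ℂ) * xA * (CA (2⁻¹:ℂ) * xA) = CA (2⁻¹:ℂ) * CA (2⁻¹:ℂ) * xA^2 by ring,
      ← map_mul, show ((2⁻¹:ℂ) * 2⁻¹) = (4⁻¹:ℂ) by norm_num]
    ring
  have e2 : Cm xA * Cm (CA (2⁻¹ : ℂ) * xA)
      = Cm (xA ^ 2 * CA (4⁻¹:ℂ)) + Cm (xA ^ 2 * CA (4⁻¹:ℂ)) := by
    rw [← map_mul, ← map_add]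
    congr 1
    rw [show (2⁻¹:ℂ) = (4⁻¹:ℂ) + 4⁻¹ by norm_num, map_add]
    ring
  have f3 : Cm xA * Nb = Cm (xA * CA (((b.factorial:ℂ) * (2*(b:ℂ)+1))⁻¹)) * Q ^ (2*b+1) := by
    rw [hNb, ← mul_assoc, ← map_mul]
  linear_combination f1 + E * e1 - E * e2 - f3

noncomputable def G3x (Q : RR) : ℕ × ℕ → RR := fun p =>
  Cm (CA (2 * ((p.1.factorial:ℂ)⁻¹ * (p.2.factorial:ℂ)⁻¹))) *
    (Tt p.1 * (Tt p.2 * (Q ^ (2*p.1+2*p.2+1) * dXA Q)))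

lemma LF_G3x (Q : RR) : LF (G3x Q) := LF_shape2

lemma Gxsplit (Q : RR) (p : ℕ × ℕ) : dXA (Gf Q p) = G3x Q p := by
  obtain ⟨a, c⟩ := p
  unfold Gf G3x
  simp only
  rw [dXA_CA_mul, dXA_mul, dXA_mul, dXA_Tt, dXA_Tt,
    show 2*a+2*c+2 = (2*a+2*c+1)+1 by omega, dXA_pow, constCast]
  have hc : Cm (CA (((a.factorial:ℂ) * (c.factorial:ℂ) * ((a:ℂ)+(c:ℂ)+1))⁻¹))
        * Cm (CA (((2*a+2*c+1 : ℕ):ℂ) + 1))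
      = Cm (CA (2 * ((a.factorial:ℂ)⁻¹ * (c.factorial:ℂ)⁻¹))) := by
    rw [CmCA_mul]
    congr 2
    rw [show (((2*a+2*c+1 : ℕ):ℂ) + 1) = 2*(a:ℂ)+2*(c:ℂ)+2 by push_cast; ring]
    exact const1 a c
  linear_combination (Tt a * Tt c * (Q ^ (2*a+2*c+1) * dXA Q)) * hc

lemma G3x_Kf (Q : RR) (p : ℕ × ℕ) :
    Cm (CA (2⁻¹:ℂ)) * G3x Q p = Kf Q p.1 * ((fun c => Wf Q c * dXA Q) p.2) := by
  unfold G3x Kf Wf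
  simp only
  rw [← mul_assoc, CmCA_mul,
    show ((2⁻¹:ℂ) * (2 * ((p.1.factorial:ℂ)⁻¹ * (p.2.factorial:ℂ)⁻¹)))
      = (p.1.factorial:ℂ)⁻¹ * (p.2.factorial:ℂ)⁻¹ by ring, ← CmCA_mul]
  ring

lemma Hxsplit (Q : RR) (c : ℕ) : dXA (Hf Q c) = Wf Q c * dXA Q := by
  unfold Hf Wf
  rw [dXA_CA_mul, dXA_mul, dXA_Tt, dXA_pow, constCast]
  have hc : Cm (CA (((c.factorial:ℂ) * (2*(c:ℂ)+1))⁻¹)) * Cm (CA (((2*c : ℕ):ℂ) + 1))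
      = Cm (CA ((c.factorial:ℂ)⁻¹)) := by
    rw [CmCA_mul]
    congr 2
    rw [show (((2*c : ℕ):ℂ) + 1) = 2*(c:ℂ)+1 by push_cast; ring]
    exact const2 c
  linear_combination (Tt c * Q ^ (2*c) * dXA Q) * hc

lemma deriv_sq : PowerSeries.derivative ℂ (xA ^ 2 * CA (4⁻¹:ℂ)) = CA (2⁻¹:ℂ) * xA := by
  rw [pow_two, Derivation.leibniz, Derivation.leibniz, PowerSeries.derivative_C, derivative_xA]
  simp only [smul_eq_mul, mul_one, mul_zero, smul_zero, zero_add]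
  rw [show (2⁻¹:ℂ) = (4⁻¹:ℂ) + 4⁻¹ by norm_num, map_add]
  ring

/-- The first `x`-derivative of `F₀`. -/
lemma dXA_F0 (Q LQ : RR)
    (hQ : Q = MvPowerSeries.C (σ := ℕ) (R := PowerSeries ℂ) (PowerSeries.C (-(2⁻¹ : ℂ)) * xA) + rhsA Q)
    (hLQx : Q * dXA LQ = dXA Q) :
    dXA (F0 Q LQ) = Cm (CA (2⁻¹ : ℂ) * xA) * LQ - LSum (Hf Q) := by
  have hV : LSum (Kf Q) = Cm (CA (2⁻¹ : ℂ) * xA) := LSum_Kf Q hQ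
  rw [F0_eq, dXA_add, dXA_sub, dXA_CA_mul, dXA_mul (Cm xA) (LSum (Hf Q)), dXA_C,
    derivative_xA, map_one, dXA_mul (Cm (xA ^ 2 * CA (4⁻¹:ℂ))) LQ, dXA_C, deriv_sq,
    dXA_LSum (LF_Gf Q), dXA_LSum (LF_Hf Q), LSum_congr (Gxsplit Q), LSum_congr (Hxsplit Q)]
  have hG3 : Cm (CA (2⁻¹:ℂ)) * LSum (G3x Q)
      = Cm (CA (2⁻¹ : ℂ) * xA) * LSum (fun c => Wf Q c * dXA Q) := by
    rw [mul_LSum _ (LF_G3x Q), LSum_congr (G3x_Kf Q),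
      ← LSum_mul_LSum (LF_Kf Q) (LF_WfD Q (dXA Q)), hV]
  have hZ : LSum (fun c => Wf Q c * dXA Q) = Cm (CA (2⁻¹ : ℂ) * xA) * dXA LQ := by
    rw [LSum_congr (g := fun c => Wf Q c * (Q * dXA LQ)) (fun c => by rw [hLQx]),
      Z_lemma Q hV (dXA LQ)]
  rw [hG3, hZ]
  have e1 : Cm (CA (2⁻¹ : ℂ) * xA) * Cm (CA (2⁻¹ : ℂ) * xA)
      = Cm (xA ^ 2 * CA (4⁻¹:ℂ)) := by
    rw [← map_mul]
    congr 1
    rw [show CA (2⁻¹:ℂ) * xA * (CA (2⁻¹:ℂ) * xA) = CA (2⁻¹:ℂ) * CA (2⁻¹:ℂ) * xA^2 by ring,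
      ← map_mul, show ((2⁻¹:ℂ) * 2⁻¹) = (4⁻¹:ℂ) by norm_num]
    ring
  have e2 : Cm xA * Cm (CA (2⁻¹ : ℂ) * xA)
      = Cm (xA ^ 2 * CA (4⁻¹:ℂ)) + Cm (xA ^ 2 * CA (4⁻¹:ℂ)) := by
    rw [← map_mul, ← map_add]
    congr 1
    rw [show (2⁻¹:ℂ) = (4⁻¹:ℂ) + 4⁻¹ by norm_num, map_add]
    ring
  linear_combination (dXA LQ) * e1 - (dXA LQ) * e2

lemma M1split (Q : RR) (b a c : ℕ) :
    pdA a (M1 Q b c) = (if c = a then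
        Cm (CA (((b.factorial:ℂ) * (a.factorial:ℂ) * ((b:ℂ)+(a:ℂ)+1))⁻¹)) * Q ^ (2*b+2*a+2)
      else 0)
      + (Cm (CA (2*(b.factorial:ℂ)⁻¹)) * (Q ^ (2*b+1) * pdA a Q)) * Wf Q c := by
  unfold M1 Wf
  rw [pdA_C_mul, pdA_mul, show 2*b+2*c+2 = (2*b+2*c+1)+1 by omega, pdA_pow, constCast]
  have hc : Cm (CA (((b.factorial:ℂ) * (c.factorial:ℂ) * ((b:ℂ)+(c:ℂ)+1))⁻¹))
        * Cm (CA (((2*b+2*c+1 : ℕ):ℂ) + 1))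
      = Cm (CA (2 * ((b.factorial:ℂ)⁻¹ * (c.factorial:ℂ)⁻¹))) := by
    rw [CmCA_mul]
    congr 2
    rw [show (((2*b+2*c+1 : ℕ):ℂ) + 1) = 2*(b:ℂ)+2*(c:ℂ)+2 by push_cast; ring]
    exact const1 b c
  have hd : Cm (CA (2*(b.factorial:ℂ)⁻¹)) * Cm (CA ((c.factorial:ℂ)⁻¹))
      = Cm (CA (2 * ((b.factorial:ℂ)⁻¹ * (c.factorial:ℂ)⁻¹))) := by
    rw [CmCA_mul]
    congr 2
    ring
  by_cases h2 : c = a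
  · subst h2
    simp only [pdA_Tt, eq_self_iff_true, if_true]
    linear_combination (Tt c * (Q ^ (2*b+2*c+1) * pdA c Q)) * hc
      - (Tt c * (Q ^ (2*b+2*c+1) * pdA c Q)) * hd
  · rw [pdA_Tt, if_neg (fun h : a = c => h2 h.symm), if_neg h2]
    linear_combination (Tt c * (Q ^ (2*b+2*c+1) * pdA a Q)) * hc
      - (Tt c * (Q ^ (2*b+2*c+1) * pdA a Q)) * hd

lemma M1xsplit (Q : RR) (b c : ℕ) :
    dXA (M1 Q b c)
      = (Cm (CA (2*(b.factorial:ℂ)⁻¹)) * (Q ^ (2*b+1) * dXA Q)) * Wf Q c := by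
  unfold M1 Wf
  rw [dXA_CA_mul, dXA_mul, dXA_Tt, show 2*b+2*c+2 = (2*b+2*c+1)+1 by omega, dXA_pow,
    constCast]
  have hc : Cm (CA (((b.factorial:ℂ) * (c.factorial:ℂ) * ((b:ℂ)+(c:ℂ)+1))⁻¹))
        * Cm (CA (((2*b+2*c+1 : ℕ):ℂ) + 1))
      = Cm (CA (2 * ((b.factorial:ℂ)⁻¹ * (c.factorial:ℂ)⁻¹))) := by
    rw [CmCA_mul]
    congr 2
    rw [show (((2*b+2*c+1 : ℕ):ℂ) + 1) = 2*(b:ℂ)+2*(c:ℂ)+2 by push_cast; ring]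
    exact const1 b c
  have hd : Cm (CA (2*(b.factorial:ℂ)⁻¹)) * Cm (CA ((c.factorial:ℂ)⁻¹))
      = Cm (CA (2 * ((b.factorial:ℂ)⁻¹ * (c.factorial:ℂ)⁻¹))) := by
    rw [CmCA_mul]
    congr 2
    ring
  linear_combination (Tt c * (Q ^ (2*b+2*c+1) * dXA Q)) * hc
    - (Tt c * (Q ^ (2*b+2*c+1) * dXA Q)) * hd

lemma hf1 (b : ℕ) : Cm (CA (2*(b.factorial:ℂ)⁻¹)) * Cm (CA (2⁻¹ : ℂ) * xA)
    = Cm (xA * CA ((b.factorial:ℂ)⁻¹)) := by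
  rw [← map_mul]
  congr 1
  rw [show CA (2*(b.factorial:ℂ)⁻¹) * (CA (2⁻¹:ℂ) * xA)
      = CA (2*(b.factorial:ℂ)⁻¹) * CA (2⁻¹:ℂ) * xA by ring, ← map_mul,
    show (2*(b.factorial:ℂ)⁻¹ * 2⁻¹) = (b.factorial:ℂ)⁻¹ by ring]
  ring

lemma hf2 (b : ℕ) : Cm (xA * CA (((b.factorial:ℂ) * (2*(b:ℂ)+1))⁻¹))
      * Cm (CA (((2*b : ℕ):ℂ) + 1))
    = Cm (xA * CA ((b.factorial:ℂ)⁻¹)) := by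
  rw [← map_mul]
  congr 1
  rw [show xA * CA (((b.factorial:ℂ) * (2*(b:ℂ)+1))⁻¹) * CA (((2*b : ℕ):ℂ) + 1)
      = CA (((b.factorial:ℂ) * (2*(b:ℂ)+1))⁻¹) * CA (((2*b : ℕ):ℂ) + 1) * xA by ring,
    ← map_mul, show (((2*b : ℕ):ℂ) + 1) = 2*(b:ℂ)+1 by push_cast; ring, const2 b]
  ring

lemma derivative_xA_CA (r : ℂ) : PowerSeries.derivative ℂ (xA * CA r) = CA r := by
  rw [Derivation.leibniz, PowerSeries.derivative_C, derivative_xA]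
  simp [smul_eq_mul]

lemma pdA_pdA_F0 (Q LQ : RR)
    (hQ : Q = MvPowerSeries.C (σ := ℕ) (R := PowerSeries ℂ) (PowerSeries.C (-(2⁻¹ : ℂ)) * xA) + rhsA Q)
    (hLQ : ∀ a : ℕ, Q * pdA a LQ = pdA a Q) (a b : ℕ) :
    pdA a (pdA b (F0 Q LQ))
      = Cm (CA (((a.factorial : ℂ) * (b.factorial : ℂ) * ((a : ℂ)+(b : ℂ)+1))⁻¹))
        * Q ^ (2*a+2*b+2) := by
  have hV : LSum (Kf Q) = Cm (CA (2⁻¹ : ℂ) * xA) := LSum_Kf Q hQ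
  have hQW2 : Q * LSum (Wf Q) = Cm (CA (2⁻¹:ℂ) * xA) := by rw [QW]; exact hV
  set Tg := Cm (CA (((b.factorial:ℂ) * (a.factorial:ℂ) * ((b:ℂ)+(a:ℂ)+1))⁻¹))
      * Q ^ (2*b+2*a+2) with hTgdef
  set gB := Cm (CA (2*(b.factorial:ℂ)⁻¹)) * (Q ^ (2*b+1) * pdA a Q) with hgBdef
  rw [pdA_F0 Q LQ hQ hLQ b, pdA_sub, pdA_LSum a (LF_M1 Q b), LSum_congr (M1split Q b a),
    LSum_add (LF_delta a Tg) (LF_mul_left gB (LF_Wf Q)), LSum_delta,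
    ← mul_LSum gB (LF_Wf Q), pdA_C_mul, pdA_pow, constCast]
  have hTg2 : Tg = Cm (CA (((a.factorial : ℂ) * (b.factorial : ℂ) * ((a : ℂ)+(b : ℂ)+1))⁻¹))
      * Q ^ (2*a+2*b+2) := by
    rw [hTgdef, show 2*b+2*a+2 = 2*a+2*b+2 by omega,
      show (((b.factorial:ℂ) * (a.factorial:ℂ) * ((b:ℂ)+(a:ℂ)+1))⁻¹)
        = (((a.factorial : ℂ) * (b.factorial : ℂ) * ((a : ℂ)+(b : ℂ)+1))⁻¹) by ring]
  rw [hgBdef]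
  linear_combination hTg2
    + (Cm (CA (2*(b.factorial:ℂ)⁻¹)) * (Q ^ (2*b) * pdA a Q)) * hQW2
    + (Q ^ (2*b) * pdA a Q) * hf1 b - (Q ^ (2*b) * pdA a Q) * hf2 b

lemma dXA_pdA_F0 (Q LQ : RR)
    (hQ : Q = MvPowerSeries.C (σ := ℕ) (R := PowerSeries ℂ) (PowerSeries.C (-(2⁻¹ : ℂ)) * xA) + rhsA Q)
    (hLQ : ∀ a : ℕ, Q * pdA a LQ = pdA a Q) (b : ℕ) :
    dXA (pdA b (F0 Q LQ))
      = - Cm (CA (((b.factorial : ℂ) * (2*(b : ℂ)+1))⁻¹)) * Q ^ (2*b+1) := by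
  have hV : LSum (Kf Q) = Cm (CA (2⁻¹ : ℂ) * xA) := LSum_Kf Q hQ
  have hQW2 : Q * LSum (Wf Q) = Cm (CA (2⁻¹:ℂ) * xA) := by rw [QW]; exact hV
  set gX := Cm (CA (2*(b.factorial:ℂ)⁻¹)) * (Q ^ (2*b+1) * dXA Q) with hgXdef
  rw [pdA_F0 Q LQ hQ hLQ b, dXA_sub, dXA_LSum (LF_M1 Q b), LSum_congr (M1xsplit Q b),
    ← mul_LSum gX (LF_Wf Q),
    dXA_mul (Cm (xA * CA (((b.factorial:ℂ) * (2*(b:ℂ)+1))⁻¹))) (Q ^ (2*b+1)),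
    dXA_C, derivative_xA_CA, dXA_pow, constCast, hgXdef]
  linear_combination (Cm (CA (2*(b.factorial:ℂ)⁻¹)) * (Q ^ (2*b) * dXA Q)) * hQW2
    + (Q ^ (2*b) * dXA Q) * hf1 b - (Q ^ (2*b) * dXA Q) * hf2 b

lemma derivative_CA_xA : PowerSeries.derivative ℂ (CA (2⁻¹:ℂ) * xA) = CA (2⁻¹:ℂ) := by
  rw [show CA (2⁻¹:ℂ) * xA = xA * CA (2⁻¹:ℂ) by ring, derivative_xA_CA]

lemma dXA_dXA_F0 (Q LQ : RR)
    (hQ : Q = MvPowerSeries.C (σ := ℕ) (R := PowerSeries ℂ) (PowerSeries.C (-(2⁻¹ : ℂ)) * xA) + rhsA Q)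
    (hLQx : Q * dXA LQ = dXA Q) :
    dXA (dXA (F0 Q LQ)) = Cm (CA (2⁻¹ : ℂ)) * LQ := by
  have hV : LSum (Kf Q) = Cm (CA (2⁻¹ : ℂ) * xA) := LSum_Kf Q hQ
  rw [dXA_F0 Q LQ hQ hLQx, dXA_sub, dXA_mul (Cm (CA (2⁻¹ : ℂ) * xA)) LQ, dXA_C,
    derivative_CA_xA, dXA_LSum (LF_Hf Q), LSum_congr (Hxsplit Q)]
  have hZ : LSum (fun c => Wf Q c * dXA Q) = Cm (CA (2⁻¹ : ℂ) * xA) * dXA LQ := by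
    rw [LSum_congr (g := fun c => Wf Q c * (Q * dXA LQ)) (fun c => by rw [hLQx]),
      Z_lemma Q hV (dXA LQ)]
  rw [hZ]
  ring

end BGW

/-- The genus-zero free energy `F₀` of the generalized BGW model has the second
derivatives `∂²F₀/∂T_{2a+1}∂T_{2b+1} = Q^{2a+2b+2}/(a!b!(a+b+1))`,
`∂²F₀/∂x∂T_{2b+1} = -Q^{2b+1}/(b!(2b+1))` and `∂²F₀/∂x² = (1/2)·log Q`. -/
theorem stmt10 (Q LQ : MvPowerSeries ℕ (PowerSeries ℂ))
    (hQ : Q = MvPowerSeries.C (σ := ℕ) (R := PowerSeries ℂ) (PowerSeries.C (-(2⁻¹ : ℂ)) * xA)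
      + rhsA Q)
    (hLQ : ∀ a : ℕ, Q * pdA a LQ = pdA a Q)
    (hLQx : Q * dXA LQ = dXA Q) :
    (∀ a b : ℕ, pdA a (pdA b (F0 Q LQ))
      = MvPowerSeries.C (σ := ℕ) (R := PowerSeries ℂ)
          (PowerSeries.C (((a.factorial : ℂ) * (b.factorial : ℂ) * ((a : ℂ)+(b : ℂ)+1))⁻¹))
        * Q ^ (2*a+2*b+2)) ∧
    (∀ b : ℕ, dXA (pdA b (F0 Q LQ))
      = - MvPowerSeries.C (σ := ℕ) (R := PowerSeries ℂ)
          (PowerSeries.C (((b.factorial : ℂ) * (2*(b : ℂ)+1))⁻¹))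
        * Q ^ (2*b+1)) ∧
    dXA (dXA (F0 Q LQ))
      = MvPowerSeries.C (σ := ℕ) (R := PowerSeries ℂ) (PowerSeries.C (2⁻¹ : ℂ)) * LQ := by
  refine ⟨fun a b => BGW.pdA_pdA_F0 Q LQ hQ hLQ a b,
    fun b => BGW.dXA_pdA_F0 Q LQ hQ hLQ b,
    BGW.dXA_dXA_F0 Q LQ hQ hLQx⟩
end
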